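/- Let ν be an infinite regular cardinal with ν^{<ν} = ν and let A ⊆ ν^ν. Player I has a winning strategy in the Banach–Mazur game G_ν(A) if and only if there is a dense homomorphism f : ν^{<ν} → ν^{<ν} with ran(f*) ⊆ A. -/

import Mathlib

universe u

noncomputable section

/-! ## Sequences of ordinals

`SeqLT o v` is the set `v^{<o}` of all sequences of ordinals `< v` of length `< o`
(for `o > 0`; values beyond the length are normalized to `0`).
`SeqFull o v` is the generalized Baire space `v^o` of all functions from ordinals `< o`
to ordinals `< v`. -/

/-- An element of `v^{<o}`: a sequence of ordinals `< v` of length `< o`. -/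
structure SeqLT (o v : Ordinal.{u}) : Type (u + 1) where
  len : Ordinal.{u}
  len_lt : len < o ⊔ 1
  val : Ordinal.{u} → Ordinal.{u}
  val_lt : ∀ β, β < len → val β < v
  val_zero : ∀ β, len ≤ β → val β = 0

namespace SeqLT

variable {o v : Ordinal.{u}}

/-- `s ⊆ t`, i.e. `t` end-extends `s`. -/
protected def le (s t : SeqLT o v) : Prop :=
  s.len ≤ t.len ∧ ∀ β, β < s.len → s.val β = t.val β

/-- `s ⊊ t`, i.e. `t` properly end-extends `s`. -/
protected def slt (s t : SeqLT o v) : Prop :=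
  s.le t ∧ s.len < t.len

/-- The empty sequence. -/
protected def empty (o v : Ordinal.{u}) : SeqLT o v where
  len := 0
  len_lt := lt_sup_iff.mpr (Or.inr zero_lt_one)
  val := fun _ => 0
  val_lt := fun β h => absurd h (not_lt_of_ge (zero_le : (0 : Ordinal.{u}) ≤ β))
  val_zero := fun _ _ => rfl

/-- `s⌢⟨β⟩`: the sequence `s` extended by the single value `β`. -/
def snoc (s : SeqLT o v) (β : Ordinal.{u}) : SeqLT o v :=
  if h : s.len + 1 < o ⊔ 1 ∧ β < v then
    { len := s.len + 1
      len_lt := h.1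
      val := fun γ => if γ = s.len then β else s.val γ
      val_lt := fun γ hγ => by
        rcases eq_or_ne γ s.len with rfl | hne
        · simpa using h.2
        · simp only [if_neg hne]
          refine s.val_lt γ (lt_of_le_of_ne ?_ hne)
          rw [Ordinal.add_one_eq_succ] at hγ
          exact Order.lt_succ_iff.mp hγ
      val_zero := fun γ hγ => by
        have h1 : s.len < γ :=
          lt_of_lt_of_le (by rw [Ordinal.add_one_eq_succ]; exact Order.lt_succ s.len) hγ
        simp only [if_neg h1.ne']
        exact s.val_zero γ h1.le }
  else s

protected theorem le_refl (s : SeqLT o v) : s.le s :=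
  ⟨le_rfl, fun _ _ => rfl⟩

protected theorem le_trans {s t u : SeqLT o v} (h1 : s.le t) (h2 : t.le u) : s.le u :=
  ⟨h1.1.trans h2.1, fun β hβ => (h1.2 β hβ).trans (h2.2 β (lt_of_lt_of_le hβ h1.1))⟩

end SeqLT

/-- An element of the generalized Baire space `v^o`. -/
structure SeqFull (o v : Ordinal.{u}) : Type (u + 1) where
  val : Ordinal.{u} → Ordinal.{u}
  val_lt : ∀ β, β < o → val β < v
  val_zero : ∀ β, o ≤ β → val β = 0

/-- The restriction `x ↾ β` of `x : v^o` to an ordinal `β < o`. -/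
def SeqFull.res {o v : Ordinal.{u}} (x : SeqFull o v) (β : Ordinal.{u}) : SeqLT o v :=
  if h : β < o ⊔ 1 then
    { len := β
      len_lt := h
      val := fun γ => if γ < β then x.val γ else 0
      val_lt := fun γ hγ => by
        simp only [if_pos hγ]
        rcases lt_sup_iff.mp h with h' | h'
        · exact x.val_lt γ (hγ.trans h')
        · rw [Ordinal.lt_one_iff_zero] at h'
          exact absurd (h' ▸ hγ) (not_lt_of_ge (zero_le : (0 : Ordinal.{u}) ≤ γ))
      val_zero := fun γ hγ => if_neg (not_lt.mpr hγ) }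
  else SeqLT.empty o v

/-- `s ⊆ x`: the sequence `s` is an initial segment of `x : v^o`. -/
def SeqLT.prefixOf {o v : Ordinal.{u}} (s : SeqLT o v) (x : SeqFull o v) : Prop :=
  ∀ β, β < s.len → s.val β = x.val β

/-! ## The bounded topology -/

/-- The basic open set `N_t`. -/
def basicOpen {o v : Ordinal.{u}} (t : SeqLT o v) : Set (SeqFull o v) :=
  {x | t.prefixOf x}

/-- The bounded (standard) topology on the generalized Baire space, generated by the
basic open sets `N_t`. -/
instance (o v : Ordinal.{u}) : TopologicalSpace (SeqFull o v) :=
  TopologicalSpace.generateFrom {U | ∃ t : SeqLT o v, U = basicOpen t}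

/-- `A` is a nowhere dense subset of `B` (in the subspace topology on `B`). -/
def NowhereDenseIn {o v : Ordinal.{u}} (A B : Set (SeqFull o v)) : Prop :=
  A ⊆ B ∧ interior (closure {x : ↥B | (x : SeqFull o v) ∈ A}) = ∅

/-- `A` is `o`-meager in `B`: `A ∩ B` is the union of (card of) `o` many nowhere dense
subsets of `B`. -/
def MeagerIn {o v : Ordinal.{u}} (A B : Set (SeqFull o v)) : Prop :=
  ∃ F : {β : Ordinal.{u} // β < o} → Set (SeqFull o v),
    (∀ i, NowhereDenseIn (F i) B) ∧ A ∩ B = ⋃ i, F i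

/-- `A` is comeager in `B`: `B \ A` is meager in `B`. -/
def ComeagerIn {o v : Ordinal.{u}} (A B : Set (SeqFull o v)) : Prop :=
  MeagerIn (B \ A) B

/-- `A` has the `o`-Baire property: for some open `U`, `A △ U` is meager. -/
def BaireSet {o v : Ordinal.{u}} (A : Set (SeqFull o v)) : Prop :=
  ∃ U : Set (SeqFull o v), IsOpen U ∧ MeagerIn (symmDiff A U) Set.univ

/-! ## Homomorphisms of `v^{<o}` -/

/-- A homomorphism: strictly extension-preserving map of `v^{<o}` to itself. -/
def IsHom {o v : Ordinal.{u}} (f : SeqLT o v → SeqLT o v) : Prop :=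
  ∀ s t : SeqLT o v, s.slt t → (f s).slt (f t)

/-- `f` is dense: for every `s` and every `t ⊇ f(s)` there is `β < v` with
`f(s⌢⟨β⟩) ⊇ t`. -/
def IsDenseMap {o v : Ordinal.{u}} (f : SeqLT o v → SeqLT o v) : Prop :=
  ∀ s t : SeqLT o v, (f s).le t → ∃ β, β < v ∧ t.le (f (s.snoc β))

/-- `u = ⋃_{α<γ} s α` for a chain `s`. -/
def IsUnionOfChain {o v : Ordinal.{u}} (u : SeqLT o v) (γ : Ordinal.{u})
    (s : Ordinal.{u} → SeqLT o v) : Prop :=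
  (∀ α, α < γ → (s α).le u) ∧ ∀ β, β < u.len → ∃ α, α < γ ∧ β < (s α).len

/-- `f` is continuous: for every limit `γ < o` and every strictly increasing sequence
`⟨s_α : α < γ⟩`, `f(⋃_{α<γ} s_α) = ⋃_{α<γ} f(s_α)`. -/
def IsContinuousMap {o v : Ordinal.{u}} (f : SeqLT o v → SeqLT o v) : Prop :=
  ∀ γ : Ordinal.{u}, Order.IsSuccLimit γ → γ < o →
    ∀ s : Ordinal.{u} → SeqLT o v, (∀ α β, α < β → β < γ → (s α).slt (s β)) →
      ∀ u : SeqLT o v, IsUnionOfChain u γ s → IsUnionOfChain (f u) γ fun α => f (s α)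

/-- `y = f*(x) = ⋃_{α<o} f(x↾α)` for a homomorphism `f`. -/
def FStarVal {o v : Ordinal.{u}} (f : SeqLT o v → SeqLT o v) (x y : SeqFull o v) : Prop :=
  (∀ α, α < o → (f (x.res α)).prefixOf y) ∧
    ∀ β, β < o → ∃ α, α < o ∧ β < (f (x.res α)).len

/-! ## Clubs and the almost Baire property -/

/-- `C` is a club (closed unbounded set) in the ordinal `o`. -/
def IsClubIn (C : Set Ordinal.{u}) (o : Ordinal.{u}) : Prop :=
  (∀ γ ∈ C, γ < o) ∧ (∀ β, β < o → ∃ γ ∈ C, β ≤ γ) ∧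
    ∀ β, β < o → 0 < β → (∀ γ, γ < β → ∃ ξ ∈ C, γ < ξ ∧ ξ < β) → β ∈ C

/-- The set of functions coding elements of the club filter as characteristic functions. -/
def ClSet (o v : Ordinal.{u}) : Set (SeqFull o v) :=
  {x | ∃ C : Set Ordinal.{u}, IsClubIn C o ∧ ∀ i ∈ C, x.val i ≠ 0}

/-- The set of functions coding elements of the nonstationary ideal. -/
def NsSet (o v : Ordinal.{u}) : Set (SeqFull o v) :=
  {x | ∃ C : Set Ordinal.{u}, IsClubIn C o ∧ ∀ i ∈ C, x.val i = 0}

/-- `A` is almost Baire: there is a dense homomorphism `f` with `ran f* ⊆ A`, or a dense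
continuous homomorphism `f` with `f ∅ = ∅` and `ran f* ⊆ Aᶜ`. -/
def AlmostBaire {o v : Ordinal.{u}} (A : Set (SeqFull o v)) : Prop :=
  ∃ f : SeqLT o v → SeqLT o v, IsHom f ∧ IsDenseMap f ∧
    ((∀ x y, FStarVal f x y → y ∈ A) ∨
      ((∀ x y, FStarVal f x y → y ∉ A) ∧ IsContinuousMap f ∧
        f (SeqLT.empty o v) = SeqLT.empty o v))

/-! ## Banach–Mazur games of length `o`

A run of the game is a strictly increasing sequence `⟨s_α : α < o⟩` in `v^{<o}`;
player I plays at even positions (`0` and limits count as even), player II at odd ones.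
In the game `G^t` the first move of player I must extend `t`; taking `t = ∅` gives the
plain Banach–Mazur game. -/

/-- `γ` is an even ordinal (`0` and limits are even). -/
def EvenOrd (γ : Ordinal.{u}) : Prop := ∃ δ : Ordinal.{u}, γ = 2 * δ

/-- `γ` is an odd ordinal. -/
def OddOrd (γ : Ordinal.{u}) : Prop := ∃ δ : Ordinal.{u}, γ = 2 * δ + 1

/-- The moves of a (partial) run, as a function on ordinals. -/
abbrev Play (o v : Ordinal.{u}) := Ordinal.{u} → SeqLT o v

/-- A strategy: given the length of the current position and the moves so far,
produce the next move. -/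
abbrev Strat (o v : Ordinal.{u}) := Ordinal.{u} → Play o v → SeqLT o v

/-- `p` is a legal partial run of length `γ` of the game `G^t`: strictly increasing moves,
the first move extends `t`, and the moves beyond `γ` are normalized to `∅`. -/
def IsPos {o v : Ordinal.{u}} (t : SeqLT o v) (p : Play o v) (γ : Ordinal.{u}) : Prop :=
  (∀ α β, α < β → β < γ → (p α).slt (p β)) ∧ (0 < γ → t.le (p 0)) ∧
    ∀ α, γ ≤ α → p α = SeqLT.empty o v

/-- The restriction of a run to its first `γ` moves. -/
def resPlay {o v : Ordinal.{u}} (p : Play o v) (γ : Ordinal.{u}) : Play o v :=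
  fun α => if α < γ then p α else SeqLT.empty o v

/-- `m` is a legal move at the position `p` of length `γ` in the game `G^t`. -/
def MoveOK {o v : Ordinal.{u}} (t : SeqLT o v) (p : Play o v) (γ : Ordinal.{u})
    (m : SeqLT o v) : Prop :=
  (∀ α, α < γ → (p α).slt m) ∧ (γ = 0 → t.le m)

/-- `σ` is a strategy for player I in `G^t`: it assigns a legal move to every legal
position of even length. -/
def LegalI {o v : Ordinal.{u}} (t : SeqLT o v) (σ : Strat o v) : Prop :=
  ∀ γ, γ < o → EvenOrd γ → ∀ p, IsPos t p γ → MoveOK t p γ (σ γ p)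

/-- `σ` is a strategy for player II in `G^t`: it assigns a legal move to every legal
position of odd length. -/
def LegalII {o v : Ordinal.{u}} (t : SeqLT o v) (σ : Strat o v) : Prop :=
  ∀ γ, γ < o → OddOrd γ → ∀ p, IsPos t p γ → MoveOK t p γ (σ γ p)

/-- The first `γ` moves of `p` follow the strategy `σ` of player I. -/
def FollowsI {o v : Ordinal.{u}} (σ : Strat o v) (p : Play o v) (γ : Ordinal.{u}) : Prop :=
  ∀ α, α < γ → EvenOrd α → p α = σ α (resPlay p α)

/-- The first `γ` moves of `p` follow the strategy `σ` of player II. -/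
def FollowsII {o v : Ordinal.{u}} (σ : Strat o v) (p : Play o v) (γ : Ordinal.{u}) : Prop :=
  ∀ α, α < γ → OddOrd α → p α = σ α (resPlay p α)

/-- `x = ⋃_{α<o} p α` is the outcome of the complete run `p`. -/
def IsOutcome {o v : Ordinal.{u}} (p : Play o v) (x : SeqFull o v) : Prop :=
  (∀ α, α < o → (p α).prefixOf x) ∧ ∀ β, β < o → ∃ α, α < o ∧ β < (p α).len

/-- Player I has a winning strategy in the Banach–Mazur game `G^t(A)` of length `o`. -/
def WinIStrat {o v : Ordinal.{u}} (t : SeqLT o v) (A : Set (SeqFull o v)) : Prop :=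
  ∃ σ : Strat o v, LegalI t σ ∧
    ∀ p : Play o v, IsPos t p o → FollowsI σ p o → ∃ x, IsOutcome p x ∧ x ∈ A

/-- Player II has a winning strategy in the Banach–Mazur game `G^t(A)` of length `o`. -/
def WinIIStrat {o v : Ordinal.{u}} (t : SeqLT o v) (A : Set (SeqFull o v)) : Prop :=
  ∃ σ : Strat o v, LegalII t σ ∧
    ∀ p : Play o v, IsPos t p o → FollowsII σ p o → ∃ x, IsOutcome p x ∧ x ∉ A

/-- `σ` is a tactic for player II: its moves depend only on the union of the previous moves. -/
def IsTacticII {o v : Ordinal.{u}} (t : SeqLT o v) (σ : Strat o v) : Prop :=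
  ∃ f : SeqLT o v → SeqLT o v, ∀ γ, γ < o → OddOrd γ → ∀ p, IsPos t p γ →
    ∀ u, IsUnionOfChain u γ p → σ γ p = f u

/-- Player II has a winning tactic in the Banach–Mazur game `G^t(A)` of length `o`. -/
def WinIITactic {o v : Ordinal.{u}} (t : SeqLT o v) (A : Set (SeqFull o v)) : Prop :=
  ∃ σ : Strat o v, LegalII t σ ∧ IsTacticII t σ ∧
    ∀ p : Play o v, IsPos t p o → FollowsII σ p o → ∃ x, IsOutcome p x ∧ x ∉ A

/-! ## Trees and perfect sets -/

/-- A subtree of `v^{<o}`: a downwards closed set of sequences. -/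
def IsSubtree {o v : Ordinal.{u}} (T : Set (SeqLT o v)) : Prop :=
  ∀ s ∈ T, ∀ r : SeqLT o v, r.le s → r ∈ T

/-- `T` is closed: every strictly increasing sequence in `T` of length `< o` has an
upper bound in `T`. -/
def TreeClosed {o v : Ordinal.{u}} (T : Set (SeqLT o v)) : Prop :=
  ∀ γ : Ordinal.{u}, γ < o → ∀ s : Ordinal.{u} → SeqLT o v,
    (∀ α β, α < β → β < γ → (s α).slt (s β)) → (∀ α, α < γ → s α ∈ T) →
      ∃ b ∈ T, ∀ α, α < γ → (s α).le b

/-- `t` is a direct successor of `s`. -/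
def IsDirectSucc {o v : Ordinal.{u}} (s t : SeqLT o v) : Prop :=
  s.slt t ∧ t.len = s.len + 1

/-- `T` is a perfect tree: a (nonempty) closed subtree whose splitting nodes are cofinal. -/
def IsPerfectTree {o v : Ordinal.{u}} (T : Set (SeqLT o v)) : Prop :=
  T.Nonempty ∧ IsSubtree T ∧ TreeClosed T ∧
    ∀ s ∈ T, ∃ t ∈ T, s.le t ∧
      ∃ t₁ ∈ T, ∃ t₂ ∈ T, IsDirectSucc t t₁ ∧ IsDirectSucc t t₂ ∧ t₁ ≠ t₂

/-- The body `[T]` of a tree `T`: the set of branches of length `o` through `T`. -/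
def treeBody {o v : Ordinal.{u}} (T : Set (SeqLT o v)) : Set (SeqFull o v) :=
  {x | ∀ α, α < o → x.res α ∈ T}

namespace Ordinal

theorem zero_le (a : Ordinal.{u}) : 0 ≤ a := by simp

theorem not_lt_zero (a : Ordinal.{u}) : ¬ a < 0 := by simp

theorem le_zero {a : Ordinal.{u}} : a ≤ 0 ↔ a = 0 := by simp

theorem mul_lt_mul_of_pos_left {a b c : Ordinal.{u}} (h : a < b) (hc : 0 < c) :
    c * a < c * b := _root_.mul_lt_mul_of_pos_left h hc

end Ordinal

section BMAux

open Ordinal Set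

variable {o v : Ordinal.{u}}

theorem SeqLT.ext' {s t : SeqLT o v} (hlen : s.len = t.len)
    (hval : ∀ β, s.val β = t.val β) : s = t := by
  cases s; cases t
  simp only [SeqLT.mk.injEq]
  exact ⟨hlen, funext hval⟩

theorem SeqFull.ext' {x y : SeqFull o v} (hval : ∀ β, x.val β = y.val β) : x = y := by
  cases x; cases y
  simp only [SeqFull.mk.injEq]
  exact funext hval

namespace SeqLT

protected theorem slt_trans {s t u : SeqLT o v} (h1 : s.slt t) (h2 : t.slt u) : s.slt u :=
  ⟨SeqLT.le_trans h1.1 h2.1, h1.2.trans h2.2⟩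

theorem slt_of_le_of_slt {s t u : SeqLT o v} (h1 : s.le t) (h2 : t.slt u) : s.slt u :=
  ⟨SeqLT.le_trans h1 h2.1, lt_of_le_of_lt h1.1 h2.2⟩

theorem slt_of_slt_of_le {s t u : SeqLT o v} (h1 : s.slt t) (h2 : t.le u) : s.slt u :=
  ⟨SeqLT.le_trans h1.1 h2, lt_of_lt_of_le h1.2 h2.1⟩

theorem le_of_slt {s t : SeqLT o v} (h : s.slt t) : s.le t := h.1

@[simp] theorem len_empty : (SeqLT.empty o v).len = 0 := rfl
@[simp] theorem val_empty (β : Ordinal.{u}) : (SeqLT.empty o v).val β = 0 := rfl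

theorem empty_le (s : SeqLT o v) : (SeqLT.empty o v).le s :=
  ⟨Ordinal.zero_le _, fun β h => absurd h (Ordinal.not_lt_zero β)⟩

theorem eq_of_le_of_len_le {s t : SeqLT o v} (h : s.le t) (h2 : t.len ≤ s.len) : s = t := by
  have hl : s.len = t.len := le_antisymm h.1 h2
  refine SeqLT.ext' hl fun β => ?_
  rcases lt_or_ge β s.len with hβ | hβ
  · exact h.2 β hβ
  · rw [s.val_zero β hβ, t.val_zero β (hl ▸ hβ)]

theorem le_iff_slt_or_eq {s t : SeqLT o v} (h : s.le t) : s.slt t ∨ s = t := by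
  rcases lt_or_ge s.len t.len with hl | hl
  · exact Or.inl ⟨h, hl⟩
  · exact Or.inr (eq_of_le_of_len_le h hl)

/- snoc lemmas, under genuineness hypotheses -/
variable {s : SeqLT o v} {β : Ordinal.{u}}

theorem snoc_len (h1 : s.len + 1 < o ⊔ 1) (h2 : β < v) : (s.snoc β).len = s.len + 1 := by
  rw [SeqLT.snoc, dif_pos ⟨h1, h2⟩]

theorem snoc_val_last (h1 : s.len + 1 < o ⊔ 1) (h2 : β < v) : (s.snoc β).val s.len = β := by
  rw [SeqLT.snoc, dif_pos ⟨h1, h2⟩]; simp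

theorem snoc_val_of_lt (h1 : s.len + 1 < o ⊔ 1) (h2 : β < v) {γ : Ordinal.{u}}
    (hγ : γ < s.len) : (s.snoc β).val γ = s.val γ := by
  rw [SeqLT.snoc, dif_pos ⟨h1, h2⟩]; simp [ne_of_lt hγ]

theorem le_snoc (h1 : s.len + 1 < o ⊔ 1) (h2 : β < v) : s.le (s.snoc β) := by
  refine ⟨?_, fun γ hγ => (snoc_val_of_lt h1 h2 hγ).symm⟩
  rw [snoc_len h1 h2, Ordinal.add_one_eq_succ]
  exact (Order.lt_succ _).le

theorem slt_snoc (h1 : s.len + 1 < o ⊔ 1) (h2 : β < v) : s.slt (s.snoc β) := by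
  refine ⟨le_snoc h1 h2, ?_⟩
  rw [snoc_len h1 h2, Ordinal.add_one_eq_succ]
  exact Order.lt_succ _

/- prefixOf lemmas -/

theorem prefixOf_of_le {t : SeqLT o v} {x : SeqFull o v} (h1 : s.le t) (h2 : t.prefixOf x) :
    s.prefixOf x := fun γ hγ => (h1.2 γ hγ).trans (h2 γ (hγ.trans_le h1.1))

theorem le_of_prefixOf {t : SeqLT o v} {x : SeqFull o v} (h1 : s.prefixOf x)
    (h2 : t.prefixOf x) (h : s.len ≤ t.len) : s.le t :=
  ⟨h, fun γ hγ => (h1 γ hγ).trans ((h2 γ (hγ.trans_le h)).symm)⟩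

end SeqLT

namespace SeqFull

variable {x : SeqFull o v} {α : Ordinal.{u}}

theorem res_len (h : α < o ⊔ 1) : (x.res α).len = α := by rw [SeqFull.res, dif_pos h]

theorem res_val (h : α < o ⊔ 1) {γ : Ordinal.{u}} (hγ : γ < α) : (x.res α).val γ = x.val γ := by
  rw [SeqFull.res, dif_pos h]; simp [hγ]

theorem res_prefixOf (h : α < o ⊔ 1) : (x.res α).prefixOf x := fun γ hγ => by
  rw [res_len h] at hγ; exact res_val h hγ

theorem res_eq_of_prefixOf {s : SeqLT o v} (h : s.prefixOf x) : x.res s.len = s := by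
  refine SeqLT.ext' (res_len s.len_lt) fun γ => ?_
  rcases lt_or_ge γ s.len with hγ | hγ
  · rw [res_val s.len_lt hγ, h γ hγ]
  · rw [(x.res s.len).val_zero γ (by rwa [res_len s.len_lt]), s.val_zero γ hγ]

theorem res_mono (h1 : α < o ⊔ 1) {α' : Ordinal.{u}} (h2 : α' < o ⊔ 1) (h : α ≤ α') :
    (x.res α).le (x.res α') := by
  refine ⟨by rw [res_len h1, res_len h2]; exact h, fun γ hγ => ?_⟩
  rw [res_len h1] at hγ
  rw [res_val h1 hγ, res_val h2 (hγ.trans_le h)]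

end SeqFull

end BMAux

section BMAux2

attribute [local instance] Classical.propDecidable

open Ordinal Set

variable {o v : Ordinal.{u}}

/-- Supremum of `g δ` over `δ < γ`. -/
def oSup (γ : Ordinal.{u}) (g : Ordinal.{u} → Ordinal.{u}) : Ordinal.{u} :=
  ⨆ i : γ.ToType, g ((Ordinal.ToType.mk (o := γ)).symm i).1

theorem le_oSup (γ : Ordinal.{u}) (g : Ordinal.{u} → Ordinal.{u}) {δ : Ordinal.{u}}
    (h : δ < γ) : g δ ≤ oSup γ g := by
  have := le_ciSup (Ordinal.bddAbove_range.{u, u}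
    (fun i : γ.ToType => g ((Ordinal.ToType.mk (o := γ)).symm i).1))
    ((Ordinal.ToType.mk (o := γ)) ⟨δ, h⟩)
  simpa [oSup] using this

theorem lt_oSup_iff {γ : Ordinal.{u}} {g : Ordinal.{u} → Ordinal.{u}} {β : Ordinal.{u}} :
    β < oSup γ g ↔ ∃ δ, δ < γ ∧ β < g δ := by
  rw [oSup, Ordinal.lt_iSup_iff]
  constructor
  · rintro ⟨i, hi⟩
    exact ⟨((Ordinal.ToType.mk (o := γ)).symm i).1, ((Ordinal.ToType.mk (o := γ)).symm i).2, hi⟩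
  · rintro ⟨δ, hδ, hβ⟩
    exact ⟨(Ordinal.ToType.mk (o := γ)) ⟨δ, hδ⟩, by simpa using hβ⟩

theorem oSup_lt {ν : Cardinal.{u}} (hreg : ν.IsRegular) {γ : Ordinal.{u}}
    {g : Ordinal.{u} → Ordinal.{u}} (hγ : γ < ν.ord) (hg : ∀ δ, δ < γ → g δ < ν.ord) :
    oSup γ g < ν.ord := by
  refine Cardinal.iSup_lt_ord_lift_of_isRegular.{u, u} hreg ?_ ?_
  · rw [Cardinal.lift_id, Cardinal.mk_toType]
    exact Cardinal.lt_ord.mp hγ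
  · exact fun i => hg _ ((Ordinal.ToType.mk (o := γ)).symm i).2

/-- Length of the union of `g δ`, `δ < γ`. -/
def uLen (γ : Ordinal.{u}) (g : Ordinal.{u} → SeqLT o v) : Ordinal.{u} :=
  oSup γ fun δ => (g δ).len

/-- Value function of the union of `g δ`, `δ < γ`. -/
def uVal (γ : Ordinal.{u}) (g : Ordinal.{u} → SeqLT o v) : Ordinal.{u} → Ordinal.{u} :=
  fun β => if h : ∃ δ, δ < γ ∧ β < (g δ).len then (g h.choose).val β else 0

/-- Chain hypothesis for unions. -/
def IsLeChain (γ : Ordinal.{u}) (g : Ordinal.{u} → SeqLT o v) : Prop :=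
  ∀ α β, α ≤ β → β < γ → (g α).le (g β)

theorem uVal_eq {γ : Ordinal.{u}} {g : Ordinal.{u} → SeqLT o v} (hc : IsLeChain γ g)
    {δ β : Ordinal.{u}} (hδ : δ < γ) (hβ : β < (g δ).len) : uVal γ g β = (g δ).val β := by
  have h : ∃ δ, δ < γ ∧ β < (g δ).len := ⟨δ, hδ, hβ⟩
  rw [uVal, dif_pos h]
  rcases le_total h.choose δ with hle | hle
  · exact (hc _ _ hle hδ).2 β h.choose_spec.2
  · exact ((hc _ _ hle h.choose_spec.1).2 β hβ).symm

/-- The union of a chain `g δ`, `δ < γ`, of elements of `v^{<o}` (guarded). -/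
def chainU (γ : Ordinal.{u}) (g : Ordinal.{u} → SeqLT o v) : SeqLT o v :=
  if h : IsLeChain γ g ∧ uLen γ g < o ⊔ 1 then
    { len := uLen γ g
      len_lt := h.2
      val := uVal γ g
      val_lt := fun β hβ => by
        obtain ⟨δ, hδ, hβ'⟩ := lt_oSup_iff.mp hβ
        rw [uVal_eq h.1 hδ hβ']
        exact (g δ).val_lt β hβ'
      val_zero := fun β hβ => by
        rw [uVal, dif_neg]
        rintro ⟨δ, hδ, hβ'⟩
        exact absurd (lt_oSup_iff.mpr ⟨δ, hδ, hβ'⟩) hβ.not_gt }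
  else SeqLT.empty o v

theorem chainU_len {γ : Ordinal.{u}} {g : Ordinal.{u} → SeqLT o v} (hc : IsLeChain γ g)
    (hl : uLen γ g < o ⊔ 1) : (chainU γ g).len = uLen γ g := by
  rw [chainU, dif_pos ⟨hc, hl⟩]

theorem le_chainU {γ : Ordinal.{u}} {g : Ordinal.{u} → SeqLT o v} (hc : IsLeChain γ g)
    (hl : uLen γ g < o ⊔ 1) {δ : Ordinal.{u}} (hδ : δ < γ) : (g δ).le (chainU γ g) := by
  rw [chainU, dif_pos ⟨hc, hl⟩]
  exact ⟨le_oSup γ (fun δ => (g δ).len) hδ, fun β hβ => (uVal_eq hc hδ hβ).symm⟩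

theorem chainU_lt_len {γ : Ordinal.{u}} {g : Ordinal.{u} → SeqLT o v} (hc : IsLeChain γ g)
    (hl : uLen γ g < o ⊔ 1) {β : Ordinal.{u}} (hβ : β < (chainU γ g).len) :
    ∃ δ, δ < γ ∧ β < (g δ).len := by
  rw [chainU_len hc hl] at hβ
  exact lt_oSup_iff.mp hβ

/-- The union of a chain `g δ`, `δ < o`, with cofinal lengths, as an element of `v^o`. -/
def fullU (g : Ordinal.{u} → SeqLT o v) (hc : IsLeChain o g)
    (hcof : ∀ β, β < o → ∃ δ, δ < o ∧ β < (g δ).len) : SeqFull o v where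
  val := uVal o g
  val_lt := fun β hβ => by
    obtain ⟨δ, hδ, hβ'⟩ := hcof β hβ
    rw [uVal_eq hc hδ hβ']
    exact (g δ).val_lt β hβ'
  val_zero := fun β hβ => by
    rw [uVal, dif_neg]
    rintro ⟨δ, hδ, hβ'⟩
    have h1 : (g δ).len ≤ o := by
      have := (g δ).len_lt
      rcases lt_sup_iff.mp this with h | h
      · exact h.le
      · rw [Ordinal.lt_one_iff_zero] at h
        rw [h]; exact Ordinal.zero_le o
    exact absurd (hβ'.trans_le h1) (not_lt.mpr hβ)

theorem prefixOf_fullU {g : Ordinal.{u} → SeqLT o v} (hc : IsLeChain o g)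
    (hcof : ∀ β, β < o → ∃ δ, δ < o ∧ β < (g δ).len) {δ : Ordinal.{u}} (hδ : δ < o) :
    (g δ).prefixOf (fullU g hc hcof) := fun β hβ => (uVal_eq hc hδ hβ).symm

end BMAux2

section BMAux3

open Ordinal Set

variable {o v : Ordinal.{u}}

theorem evenOrd_zero : EvenOrd (0 : Ordinal.{u}) := ⟨0, by simp⟩

theorem two_mul_succ (δ : Ordinal.{u}) : 2 * (δ + 1) = 2 * δ + 2 := by
  rw [Ordinal.add_one_eq_succ, Ordinal.mul_succ]

theorem add_two_eq_succ_succ (α : Ordinal.{u}) : α + 2 = (α + 1) + 1 := by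
  rw [add_assoc]; norm_num

theorem lt_add_one_self (α : Ordinal.{u}) : α < α + 1 := by
  rw [Ordinal.add_one_eq_succ]; exact Order.lt_succ _

theorem lt_add_two_self (α : Ordinal.{u}) : α < α + 2 := by
  rw [add_two_eq_succ_succ]
  exact (lt_add_one_self α).trans (lt_add_one_self (α + 1))

theorem add_two_lt {α γ : Ordinal.{u}} (hγ : Order.IsSuccLimit γ) (h : α < γ) : α + 2 < γ := by
  rw [add_two_eq_succ_succ, Ordinal.add_one_eq_succ, Ordinal.add_one_eq_succ]
  exact hγ.succ_lt (hγ.succ_lt h)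

theorem evenOrd_or_oddOrd (γ : Ordinal.{u}) : EvenOrd γ ∨ OddOrd γ := by
  have hd : 2 * (γ / 2) + γ % 2 = γ := Ordinal.div_add_mod γ 2
  have hm : γ % 2 < 2 := Ordinal.mod_lt γ (by norm_num)
  have hle : γ % 2 ≤ 1 := by
    have h21 : (2 : Ordinal.{u}) = Order.succ 1 := by
      rw [← Ordinal.add_one_eq_succ]; norm_num
    rw [h21] at hm ⊢
    exact Order.lt_succ_iff.mp hm
  rcases Ordinal.le_one_iff.mp hle with h | h
  · left; refine ⟨γ / 2, ?_⟩
    conv_lhs => rw [← hd]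
    rw [h, add_zero]
  · right; refine ⟨γ / 2, ?_⟩
    conv_lhs => rw [← hd]
    rw [h]

theorem not_evenOrd_and_oddOrd {γ : Ordinal.{u}} (h1 : EvenOrd γ) (h2 : OddOrd γ) : False := by
  obtain ⟨δ, rfl⟩ := h1
  obtain ⟨δ', h⟩ := h2
  rcases lt_trichotomy δ δ' with hlt | rfl | hlt
  · have h3 : 2 * δ < 2 * δ' := Ordinal.mul_lt_mul_of_pos_left hlt (by norm_num)
    have h4 : 2 * δ' < 2 * δ' + 1 := by
      rw [Ordinal.add_one_eq_succ]; exact Order.lt_succ _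
    rw [h] at h3
    exact absurd (h3.trans h4) (lt_irrefl _)
  · have h4 : 2 * δ < 2 * δ + 1 := by
      rw [Ordinal.add_one_eq_succ]; exact Order.lt_succ _
    rw [← h] at h4
    exact absurd h4 (lt_irrefl _)
  · have h3 : 2 * δ' + 2 ≤ 2 * δ := by
      rw [← two_mul_succ]
      refine mul_le_mul_right ?_ 2
      rw [Ordinal.add_one_eq_succ, Order.succ_le_iff]
      exact hlt
    rw [h] at h3
    have h5 := (add_le_add_iff_left (2 * δ')).mp h3
    norm_num at h5

theorem oddOrd_succ_of_evenOrd {γ : Ordinal.{u}} (h : EvenOrd γ) : OddOrd (γ + 1) := by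
  obtain ⟨δ, rfl⟩ := h; exact ⟨δ, rfl⟩

theorem evenOrd_succ_of_oddOrd {γ : Ordinal.{u}} (h : OddOrd γ) : EvenOrd (γ + 1) := by
  obtain ⟨δ, rfl⟩ := h
  exact ⟨δ + 1, by rw [two_mul_succ, add_two_eq_succ_succ]⟩

theorem evenOrd_of_isLimit {γ : Ordinal.{u}} (h : Order.IsSuccLimit γ) : EvenOrd γ := by
  rcases evenOrd_or_oddOrd γ with he | ho
  · exact he
  · obtain ⟨δ, rfl⟩ := ho
    rw [Ordinal.add_one_eq_succ] at h
    exact absurd h (Order.not_isSuccLimit_succ _)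

theorem oddOrd_of_evenOrd_succ {γ : Ordinal.{u}} (h : EvenOrd (γ + 1)) : OddOrd γ := by
  rcases evenOrd_or_oddOrd γ with he | ho
  · exact absurd (oddOrd_succ_of_evenOrd he) fun h2 => not_evenOrd_and_oddOrd h h2
  · exact ho

theorem evenOrd_of_oddOrd_succ {γ : Ordinal.{u}} (h : OddOrd (γ + 1)) : EvenOrd γ := by
  rcases evenOrd_or_oddOrd γ with he | ho
  · exact he
  · exact absurd (evenOrd_succ_of_oddOrd ho) fun h2 => not_evenOrd_and_oddOrd h2 h

theorem exists_evenOrd_between {α γ : Ordinal.{u}} (hγ : Order.IsSuccLimit γ) (h : α < γ) :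
    ∃ ε, EvenOrd ε ∧ α < ε ∧ ε < γ := by
  rcases evenOrd_or_oddOrd α with he | ho
  · obtain ⟨δ, rfl⟩ := he
    refine ⟨2 * δ + 2, ⟨δ + 1, (two_mul_succ δ).symm⟩, ?_, ?_⟩
    · exact lt_add_two_self _
    · exact add_two_lt hγ h
  · refine ⟨α + 1, evenOrd_succ_of_oddOrd ho, lt_add_one_self α, ?_⟩
    rw [Ordinal.add_one_eq_succ]; exact hγ.succ_lt h

/-- In a strictly increasing run, the length of the `α`-th move is at least `α`. -/
theorem le_len_of_chain {p : Play o v} {γ : Ordinal.{u}}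
    (hchain : ∀ α β, α < β → β < γ → (p α).slt (p β)) :
    ∀ α, α < γ → α ≤ (p α).len := by
  intro α
  induction α using Ordinal.induction with
  | h α IH =>
    intro hα
    by_contra hcon
    push_neg at hcon
    have h1 : (p α).len ≤ (p (p α).len).len := IH _ hcon (hcon.trans hα)
    have h2 : (p (p α).len).len < (p α).len := (hchain _ _ hcon hα).2
    exact absurd (h1.trans_lt h2) (lt_irrefl _)

theorem outcome_unique {p : Play o v} {x y : SeqFull o v} (hx : IsOutcome p x)
    (hy : IsOutcome p y) : x = y := by
  refine SeqFull.ext' fun β => ?_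
  rcases lt_or_ge β o with hβ | hβ
  · obtain ⟨α, hα, hβ'⟩ := hx.2 β hβ
    rw [← hx.1 α hα β hβ', hy.1 α hα β hβ']
  · rw [x.val_zero β hβ, y.val_zero β hβ]

end BMAux3

section BMAux4

attribute [local instance] Classical.propDecidable

open Ordinal Set Cardinal

theorem sup_one_eq {ν : Cardinal.{u}} (hreg : ν.IsRegular) : ν.ord ⊔ 1 = ν.ord :=
  sup_eq_left.mpr (Ordinal.one_lt_of_isSuccLimit (Cardinal.isSuccLimit_ord hreg.aleph0_le)).le

theorem seqLT_mk_le {ν : Cardinal.{u}} (hreg : ν.IsRegular)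
    (hpow : Cardinal.powerlt ν ν = ν) :
    #(SeqLT ν.ord ν.ord) ≤ #(Set.Iio ν.ord) := by
  -- surjection from the sigma type
  have hΨ : ∃ Ψ : (Σ l : Set.Iio ν.ord, (Set.Iio l.1 → Set.Iio ν.ord)) → SeqLT ν.ord ν.ord,
      Function.Surjective Ψ := by
    refine ⟨fun d =>
      { len := d.1.1
        len_lt := lt_of_lt_of_le d.1.2 le_sup_left
        val := fun β => if h : β < d.1.1 then (d.2 ⟨β, h⟩).1 else 0
        val_lt := fun β hβ => by rw [dif_pos hβ]; exact (d.2 ⟨β, hβ⟩).2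
        val_zero := fun β hβ => dif_neg (not_lt.mpr hβ) }, fun s => ?_⟩
    have hlen : s.len < ν.ord := lt_of_lt_of_le s.len_lt (sup_one_eq hreg).le
    refine ⟨⟨⟨s.len, hlen⟩, fun β => ⟨s.val β.1, s.val_lt β.1 β.2⟩⟩, ?_⟩
    refine SeqLT.ext' rfl fun β => ?_
    by_cases hβ : β < s.len
    · simp [hβ]
    · simp only [hβ, dif_neg, not_false_iff]
      exact (s.val_zero β (not_lt.mp hβ)).symm
  obtain ⟨Ψ, hΨs⟩ := hΨ
  refine le_trans (Cardinal.mk_le_of_surjective hΨs) ?_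
  rw [Cardinal.mk_sigma]
  have hbound : ∀ l : Set.Iio ν.ord, #(Set.Iio l.1 → Set.Iio ν.ord) ≤ Cardinal.lift.{u+1} ν := by
    intro l
    rw [← Cardinal.power_def, Ordinal.mk_Iio_ordinal, Ordinal.mk_Iio_ordinal,
      Cardinal.card_ord, ← Cardinal.lift_power]
    refine Cardinal.lift_le.mpr ?_
    refine Cardinal.powerlt_le.mp (le_of_eq hpow) _ ?_
    exact Cardinal.lt_ord.mp l.2
  refine le_trans (Cardinal.sum_le_sum _ _ hbound) ?_
  rw [Cardinal.sum_const', Ordinal.mk_Iio_ordinal, Cardinal.card_ord,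
    Cardinal.mul_eq_self (Cardinal.aleph0_le_lift.mpr hreg.aleph0_le)]

theorem exists_enum {ν : Cardinal.{u}} (hreg : ν.IsRegular)
    (hpow : Cardinal.powerlt ν ν = ν) :
    ∃ E : Ordinal.{u} → SeqLT ν.ord ν.ord, ∀ t, ∃ β, β < ν.ord ∧ E β = t := by
  obtain ⟨i⟩ := Cardinal.le_def _ _ |>.mp (seqLT_mk_le hreg hpow)
  refine ⟨fun β => if h : ∃ t, (i t).1 = β then h.choose else SeqLT.empty _ _, fun t => ?_⟩
  refine ⟨(i t).1, (i t).2, ?_⟩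
  have h : ∃ t', (i t').1 = (i t).1 := ⟨t, rfl⟩
  dsimp only
  rw [dif_pos h]
  exact i.injective (Subtype.ext h.choose_spec)

end BMAux4

section BMAux5

attribute [local instance] Classical.propDecidable

open Ordinal Set

variable {o v : Ordinal.{u}}

/-- Auxiliary sequence for player I's strategy built from a homomorphism. -/
def Tfun (f : SeqLT o v → SeqLT o v) (γ : Ordinal.{u}) : Play o v → SeqLT o v :=
  Ordinal.limitRecOn γ (fun _ => SeqLT.empty o v)
    (fun δ TD p => if EvenOrd δ then TD p
      else if h : ∃ β, β < v ∧ (p δ).le (f ((TD p).snoc β)) then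
        ((TD p).snoc h.choose).snoc 0
      else TD p)
    (fun γ' _ ih p =>
      (chainU γ' (fun δ => if hδ : δ < γ' then ih δ hδ p else SeqLT.empty o v)).snoc 0)

theorem Tfun_zero (f : SeqLT o v → SeqLT o v) (p : Play o v) :
    Tfun f 0 p = SeqLT.empty o v := by
  conv_lhs => rw [Tfun, Ordinal.limitRecOn_zero]

theorem Tfun_succ (f : SeqLT o v → SeqLT o v) (δ : Ordinal.{u}) (p : Play o v) :
    Tfun f (δ + 1) p = if EvenOrd δ then Tfun f δ p
      else if h : ∃ β, β < v ∧ (p δ).le (f ((Tfun f δ p).snoc β)) then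
        ((Tfun f δ p).snoc h.choose).snoc 0
      else Tfun f δ p := by
  conv_lhs => rw [Tfun, Ordinal.add_one_eq_succ, Ordinal.limitRecOn_succ]
  rfl

theorem Tfun_limit (f : SeqLT o v → SeqLT o v) {γ : Ordinal.{u}} (hγ : Order.IsSuccLimit γ)
    (p : Play o v) :
    Tfun f γ p =
      (chainU γ (fun δ => if hδ : δ < γ then Tfun f δ p else SeqLT.empty o v)).snoc 0 := by
  conv_lhs => rw [Tfun, Ordinal.limitRecOn_limit _ _ _ _ hγ]
  rfl

theorem Tfun_local (f : SeqLT o v → SeqLT o v) :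
    ∀ γ (p q : Play o v), (∀ δ, δ < γ → p δ = q δ) → Tfun f γ p = Tfun f γ q := by
  intro γ
  induction γ using Ordinal.induction with
  | h γ IH =>
    intro p q hpq
    rcases Ordinal.zero_or_succ_or_isSuccLimit γ with rfl | ⟨δ, rfl⟩ | hlim
    · rw [Tfun_zero, Tfun_zero]
    · rw [← Ordinal.add_one_eq_succ]
      have hδlt : δ < δ + 1 := lt_add_one_self δ
      have hTd : Tfun f δ p = Tfun f δ q :=
        IH δ (Ordinal.add_one_eq_succ δ ▸ hδlt) p q fun ε hε =>
          hpq ε (Ordinal.add_one_eq_succ δ ▸ hε.trans hδlt)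
      rw [Tfun_succ, Tfun_succ, hTd, hpq δ (Ordinal.add_one_eq_succ δ ▸ hδlt)]
    · rw [Tfun_limit f hlim p, Tfun_limit f hlim q]
      refine congrArg (fun s => SeqLT.snoc s 0) (congrArg _ ?_)
      funext δ
      by_cases hδ : δ < γ
      · rw [dif_pos hδ, dif_pos hδ, IH δ hδ p q fun ε hε => hpq ε (hε.trans hδ)]
      · rw [dif_neg hδ, dif_neg hδ]

/-- Player I's strategy built from a dense homomorphism. -/
def sigF (f : SeqLT o v → SeqLT o v) : Strat o v := fun γ p =>
  if γ = 0 then f (SeqLT.empty o v)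
  else if ∀ α, α < γ → (p α).slt (f (Tfun f γ p)) then f (Tfun f γ p)
  else (chainU γ p).snoc 0

theorem resPlay_lt {p : Play o v} {γ α : Ordinal.{u}} (h : α < γ) : resPlay p γ α = p α := by
  rw [resPlay]; exact if_pos h

theorem winI_of_dense {ν : Cardinal.{u}} (hreg : ν.IsRegular)
    {A : Set (SeqFull ν.ord ν.ord)} {f : SeqLT ν.ord ν.ord → SeqLT ν.ord ν.ord}
    (hhom : IsHom f) (hden : IsDenseMap f) (hA : ∀ x y, FStarVal f x y → y ∈ A) :
    WinIStrat (SeqLT.empty ν.ord ν.ord) A := by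
  have holim : Order.IsSuccLimit (ν.ord) := Cardinal.isSuccLimit_ord hreg.aleph0_le
  have ho1 : ν.ord ⊔ 1 = ν.ord := sup_one_eq hreg
  have hlen_lt : ∀ s : SeqLT ν.ord ν.ord, s.len < ν.ord := fun s =>
    lt_of_lt_of_le s.len_lt ho1.le
  have hsnoc1 : ∀ s : SeqLT ν.ord ν.ord, s.len + 1 < ν.ord ⊔ 1 := fun s => by
    rw [ho1, Ordinal.add_one_eq_succ]; exact holim.succ_lt (hlen_lt s)
  have hv0 : (0 : Ordinal.{u}) < ν.ord := holim.pos
  have hfb : ∀ γ, γ < ν.ord → ∀ p : Play ν.ord ν.ord,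
      (∀ α β, α < β → β < γ → (p α).slt (p β)) →
      ∀ α, α < γ → (p α).slt ((chainU γ p).snoc 0) := by
    intro γ hγ p hchain α hα
    have hc : IsLeChain γ p := by
      intro a b hab hb
      rcases eq_or_lt_of_le hab with rfl | h
      · exact SeqLT.le_refl _
      · exact (hchain a b h hb).1
    have hl : uLen γ p < ν.ord ⊔ 1 := by
      rw [ho1]; exact oSup_lt hreg hγ fun δ _ => hlen_lt _
    exact SeqLT.slt_of_le_of_slt (le_chainU hc hl hα) (SeqLT.slt_snoc (hsnoc1 _) hv0)
  refine ⟨sigF f, ?_, ?_⟩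
  · intro γ hγ _hev p hpos
    refine ⟨?_, fun _ => SeqLT.empty_le _⟩
    intro α hα
    have hγ0 : γ ≠ 0 := fun h => absurd (h ▸ hα) (Ordinal.not_lt_zero α)
    by_cases hcond : ∀ α', α' < γ → (p α').slt (f (Tfun f γ p))
    · simp only [sigF, if_neg hγ0, if_pos hcond]
      exact hcond α hα
    · simp only [sigF, if_neg hγ0, if_neg hcond]
      exact hfb γ hγ p hpos.1 α hα
  · intro p hpos hfoll
    have hQ : ∀ γ, γ < ν.ord →
        (∀ δ, δ ≤ γ → (Tfun f δ p).le (Tfun f γ p)) ∧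
        (EvenOrd γ → p γ = f (Tfun f γ p)) ∧
        (∀ δ, δ < γ → EvenOrd γ → (Tfun f δ p).slt (Tfun f γ p)) := by
      intro γ
      induction γ using Ordinal.induction with
      | h γ IH =>
        intro hγ
        rcases Ordinal.zero_or_succ_or_isSuccLimit γ with rfl | ⟨ε, rfl⟩ | hlim
        · refine ⟨?_, ?_, ?_⟩
          · intro δ hδ
            rw [Ordinal.le_zero.mp hδ]
            exact SeqLT.le_refl _
          · intro _
            rw [hfoll 0 hγ evenOrd_zero]
            simp only [sigF, if_true]
            rw [Tfun_zero]
          · intro δ hδ _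
            exact absurd hδ (Ordinal.not_lt_zero δ)
        · rw [← Ordinal.add_one_eq_succ] at hγ ⊢
          have hε : ε < ν.ord := (lt_add_one_self ε).trans hγ
          rcases evenOrd_or_oddOrd ε with hev | hod
          · have hT : Tfun f (ε + 1) p = Tfun f ε p := by rw [Tfun_succ, if_pos hev]
            obtain ⟨q1, _q2, _q3⟩ := IH ε (Ordinal.add_one_eq_succ ε ▸ lt_add_one_self ε) hε
            have hodd : OddOrd (ε + 1) := oddOrd_succ_of_evenOrd hev
            refine ⟨?_, ?_, ?_⟩
            · intro δ hδ
              rcases eq_or_lt_of_le hδ with rfl | hδlt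
              · exact SeqLT.le_refl _
              · have hδε : δ ≤ ε := by
                  rw [Ordinal.add_one_eq_succ] at hδlt; exact Order.lt_succ_iff.mp hδlt
                rw [hT]; exact q1 δ hδε
            · intro hev1
              exact absurd hodd fun h => not_evenOrd_and_oddOrd hev1 h
            · intro δ _ hev1
              exact absurd hodd fun h => not_evenOrd_and_oddOrd hev1 h
          · obtain ⟨ε', rfl⟩ : ∃ ε', ε = ε' + 1 := by
              obtain ⟨d, hd⟩ := hod; exact ⟨2 * d, hd⟩
            have hev' : EvenOrd ε' := evenOrd_of_oddOrd_succ hod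
            have hε'1 : ε' < ε' + 1 := lt_add_one_self ε'
            have hε'o : ε' < ν.ord := hε'1.trans hε
            obtain ⟨_, q2', _⟩ := IH ε'
              (Ordinal.add_one_eq_succ (ε' + 1) ▸ (hε'1.trans (lt_add_one_self _))) hε'o
            obtain ⟨q1, _, _⟩ := IH (ε' + 1)
              (Ordinal.add_one_eq_succ (ε' + 1) ▸ lt_add_one_self _) hε
            have hTe : Tfun f (ε' + 1) p = Tfun f ε' p := by rw [Tfun_succ, if_pos hev']
            have hple : (f (Tfun f (ε' + 1) p)).le (p (ε' + 1)) := by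
              rw [hTe, ← q2' hev']
              exact (hpos.1 ε' (ε' + 1) hε'1 hε).1
            have hex : ∃ β, β < ν.ord ∧ (p (ε' + 1)).le (f ((Tfun f (ε' + 1) p).snoc β)) :=
              hden _ _ hple
            have hT : Tfun f (ε' + 1 + 1) p =
                ((Tfun f (ε' + 1) p).snoc hex.choose).snoc 0 := by
              rw [Tfun_succ, if_neg fun h => not_evenOrd_and_oddOrd h hod, dif_pos hex]
            have hstep : (Tfun f (ε' + 1) p).slt (Tfun f (ε' + 1 + 1) p) := by
              rw [hT]
              exact SeqLT.slt_trans (SeqLT.slt_snoc (hsnoc1 _) hex.choose_spec.1)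
                (SeqLT.slt_snoc (hsnoc1 _) hv0)
            have hq1 : ∀ δ, δ ≤ ε' + 1 + 1 → (Tfun f δ p).le (Tfun f (ε' + 1 + 1) p) := by
              intro δ hδ
              rcases eq_or_lt_of_le hδ with rfl | hδlt
              · exact SeqLT.le_refl _
              · have hδε : δ ≤ ε' + 1 := by
                  rw [Ordinal.add_one_eq_succ (ε' + 1)] at hδlt
                  exact Order.lt_succ_iff.mp hδlt
                exact SeqLT.le_trans (q1 δ hδε) hstep.1
            refine ⟨hq1, ?_, ?_⟩
            · intro hevγ
              have hcond : ∀ α, α < ε' + 1 + 1 → (p α).slt (f (Tfun f (ε' + 1 + 1) p)) := by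
                intro α hα
                have hα' : α ≤ ε' + 1 := by
                  rw [Ordinal.add_one_eq_succ (ε' + 1)] at hα
                  exact Order.lt_succ_iff.mp hα
                have h1 : (p α).le (p (ε' + 1)) := by
                  rcases eq_or_lt_of_le hα' with rfl | h
                  · exact SeqLT.le_refl _
                  · exact (hpos.1 α (ε' + 1) h hε).1
                have h3 : ((Tfun f (ε' + 1) p).snoc hex.choose).slt (Tfun f (ε' + 1 + 1) p) := by
                  rw [hT]; exact SeqLT.slt_snoc (hsnoc1 _) hv0
                exact SeqLT.slt_of_le_of_slt (SeqLT.le_trans h1 hex.choose_spec.2) (hhom _ _ h3)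
              rw [hfoll (ε' + 1 + 1) hγ hevγ]
              have hne : (ε' + 1 + 1 : Ordinal.{u}) ≠ 0 := by
                rw [Ordinal.add_one_eq_succ (ε' + 1)]; exact Ordinal.succ_ne_zero _
              simp only [sigF, if_neg hne]
              rw [Tfun_local f (ε' + 1 + 1) (resPlay p (ε' + 1 + 1)) p
                fun δ hδ => resPlay_lt hδ]
              rw [if_pos ?_]
              intro α hα
              rw [resPlay_lt hα]
              exact hcond α hα
            · intro δ hδ _
              have hδε : δ ≤ ε' + 1 := by
                rw [Ordinal.add_one_eq_succ (ε' + 1)] at hδ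
                exact Order.lt_succ_iff.mp hδ
              exact SeqLT.slt_of_le_of_slt (q1 δ hδε) hstep
        · have hTl : Tfun f γ p =
              (chainU γ (fun δ => if hδ : δ < γ then Tfun f δ p else SeqLT.empty _ _)).snoc 0 :=
            Tfun_limit f hlim p
          have hgc : IsLeChain γ
              (fun δ => if hδ : δ < γ then Tfun f δ p else SeqLT.empty ν.ord ν.ord) := by
            intro a b hab hb
            simp only [dif_pos (lt_of_le_of_lt hab hb), dif_pos hb]
            exact (IH b hb (hb.trans hγ)).1 a hab
          have hgl : uLen γ
              (fun δ => if hδ : δ < γ then Tfun f δ p else SeqLT.empty ν.ord ν.ord) <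
              ν.ord ⊔ 1 := by
            rw [ho1]; exact oSup_lt hreg hγ fun δ _ => hlen_lt _
          have hub : ∀ δ, δ < γ → (Tfun f δ p).slt (Tfun f γ p) := by
            intro δ hδ
            have h1 := le_chainU hgc hgl hδ
            rw [dif_pos hδ] at h1
            rw [hTl]
            exact SeqLT.slt_of_le_of_slt h1 (SeqLT.slt_snoc (hsnoc1 _) hv0)
          refine ⟨?_, ?_, fun δ hδ _ => hub δ hδ⟩
          · intro δ hδ
            rcases eq_or_lt_of_le hδ with rfl | h
            · exact SeqLT.le_refl _
            · exact (hub δ h).1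
          · intro hevγ
            have hcond : ∀ α, α < γ → (p α).slt (f (Tfun f γ p)) := by
              intro α hα
              obtain ⟨ε, hevε, hαε, hεγ⟩ := exists_evenOrd_between hlim hα
              have h1 : (p α).slt (p ε) := hpos.1 α ε hαε (hεγ.trans hγ)
              have h2 : p ε = f (Tfun f ε p) := (IH ε hεγ (hεγ.trans hγ)).2.1 hevε
              exact SeqLT.slt_trans (h2 ▸ h1) (hhom _ _ (hub ε hεγ))
            rw [hfoll γ hγ hevγ]
            simp only [sigF, if_neg hlim.pos.ne']
            rw [Tfun_local f γ (resPlay p γ) p fun δ hδ => resPlay_lt hδ]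
            rw [if_pos ?_]
            intro α hα
            rw [resPlay_lt hα]
            exact hcond α hα
    have hchainT : IsLeChain ν.ord (fun γ => Tfun f γ p) := fun a b hab hb =>
      (hQ b hb).1 a hab
    have hmul : ∀ δ, δ < ν.ord → 2 * δ < ν.ord := by
      intro δ hδ
      rw [Cardinal.lt_ord, Ordinal.card_mul]
      have h2 : ((2 : Ordinal.{u})).card < ν := by
        have : ((2 : Ordinal.{u})).card = 2 := by
          rw [show (2 : Ordinal.{u}) = ((2 : ℕ) : Ordinal.{u}) by norm_num, Ordinal.card_nat]
          norm_num
        rw [this]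
        exact lt_of_lt_of_le (Cardinal.nat_lt_aleph0 2) hreg.aleph0_le
      exact Cardinal.mul_lt_of_lt hreg.aleph0_le h2 (Cardinal.lt_ord.mp hδ)
    have hD : ∀ β, β < ν.ord → ∃ γ, γ < ν.ord ∧ EvenOrd γ ∧ β < (Tfun f γ p).len := by
      have hind : ∀ δ, 2 * δ < ν.ord → δ ≤ (Tfun f (2 * δ) p).len := by
        intro δ
        induction δ using Ordinal.induction with
        | h δ IH2 =>
          intro h2δ
          by_contra hcon
          push_neg at hcon
          have hl := IH2 _ hcon (hmul _ (hlen_lt _))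
          have hstrict : (Tfun f (2 * (Tfun f (2 * δ) p).len) p).slt (Tfun f (2 * δ) p) :=
            (hQ (2 * δ) h2δ).2.2 _
              (Ordinal.mul_lt_mul_of_pos_left hcon (by norm_num)) ⟨δ, rfl⟩
          exact absurd (hl.trans_lt hstrict.2) (lt_irrefl _)
      intro β hβ
      have h1 : β + 1 < ν.ord := by
        rw [Ordinal.add_one_eq_succ]; exact holim.succ_lt hβ
      refine ⟨2 * (β + 1), hmul _ h1, ⟨β + 1, rfl⟩, ?_⟩
      exact lt_of_lt_of_le (lt_add_one_self β) (hind (β + 1) (hmul _ h1))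
    have hcofT : ∀ β, β < ν.ord → ∃ δ, δ < ν.ord ∧ β < (Tfun f δ p).len := by
      intro β hβ
      obtain ⟨γ, h1, _, h3⟩ := hD β hβ
      exact ⟨γ, h1, h3⟩
    have hchainP : IsLeChain ν.ord p := by
      intro a b hab hb
      rcases eq_or_lt_of_le hab with rfl | h
      · exact SeqLT.le_refl _
      · exact (hpos.1 a b h hb).1
    have hcofP : ∀ β, β < ν.ord → ∃ α, α < ν.ord ∧ β < (p α).len := by
      intro β hβ
      have h1 : β + 1 < ν.ord := by
        rw [Ordinal.add_one_eq_succ]; exact holim.succ_lt hβ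
      exact ⟨β + 1, h1, lt_of_lt_of_le (lt_add_one_self β) (le_len_of_chain hpos.1 (β + 1) h1)⟩
    refine ⟨fullU p hchainP hcofP,
      ⟨fun α hα => prefixOf_fullU hchainP hcofP hα, hcofP⟩, ?_⟩
    refine hA (fullU (fun γ => Tfun f γ p) hchainT hcofT) _ ⟨?_, ?_⟩
    · intro α hα
      obtain ⟨γ, hγ, hev, hαl⟩ := hD α hα
      have hres : ((fullU (fun γ => Tfun f γ p) hchainT hcofT).res α).le (Tfun f γ p) := by
        have heq : (fullU (fun γ => Tfun f γ p) hchainT hcofT).res (Tfun f γ p).len =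
            Tfun f γ p :=
          SeqFull.res_eq_of_prefixOf (prefixOf_fullU hchainT hcofT hγ)
        rw [← heq]
        exact SeqFull.res_mono (lt_of_lt_of_le hα le_sup_left) (Tfun f γ p).len_lt hαl.le
      have hle : (f ((fullU (fun γ => Tfun f γ p) hchainT hcofT).res α)).le (f (Tfun f γ p)) := by
        rcases SeqLT.le_iff_slt_or_eq hres with h | h
        · exact (hhom _ _ h).1
        · rw [h]
          exact SeqLT.le_refl _
      have hpγ : (p γ).prefixOf (fullU p hchainP hcofP) := prefixOf_fullU hchainP hcofP hγ
      have h2 := (hQ γ hγ).2.1 hev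
      exact SeqLT.prefixOf_of_le hle (h2 ▸ hpγ)
    · intro β hβ
      obtain ⟨ε, hevε, hβε, hεo⟩ := exists_evenOrd_between holim hβ
      refine ⟨(Tfun f ε p).len, hlen_lt _, ?_⟩
      have heq : (fullU (fun γ => Tfun f γ p) hchainT hcofT).res (Tfun f ε p).len =
          Tfun f ε p :=
        SeqFull.res_eq_of_prefixOf (prefixOf_fullU hchainT hcofT hεo)
      rw [heq, ← (hQ ε hεo).2.1 hevε]
      exact lt_of_lt_of_le hβε (le_len_of_chain hpos.1 ε hεo)

end BMAux5

section BMAux6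

attribute [local instance] Classical.propDecidable

open Ordinal Set

variable {o v : Ordinal.{u}}

theorem add_one_le_iff_lt {a b : Ordinal.{u}} : a + 1 ≤ b ↔ a < b := by
  rw [Ordinal.add_one_eq_succ]; exact Order.succ_le_iff

theorem evenOrd_add_two {γ : Ordinal.{u}} (h : EvenOrd γ) : EvenOrd (γ + 2) := by
  obtain ⟨δ, rfl⟩ := h
  exact ⟨δ + 1, (two_mul_succ δ).symm⟩

/-- Restriction of a sequence to an initial segment. -/
def resLT (s : SeqLT o v) (l : Ordinal.{u}) : SeqLT o v :=
  if h : l ≤ s.len then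
    { len := l
      len_lt := lt_of_le_of_lt h s.len_lt
      val := fun β => if β < l then s.val β else 0
      val_lt := fun β hβ => by rw [if_pos hβ]; exact s.val_lt β (hβ.trans_le h)
      val_zero := fun β hβ => if_neg (not_lt.mpr hβ) }
  else s

theorem resLT_len {s : SeqLT o v} {l : Ordinal.{u}} (h : l ≤ s.len) : (resLT s l).len = l := by
  rw [resLT, dif_pos h]

theorem resLT_val {s : SeqLT o v} {l β : Ordinal.{u}} (h : l ≤ s.len) (hβ : β < l) :
    (resLT s l).val β = s.val β := by
  rw [resLT, dif_pos h]; exact if_pos hβ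

theorem resLT_le {s : SeqLT o v} {l : Ordinal.{u}} (h : l ≤ s.len) : (resLT s l).le s :=
  ⟨by rw [resLT_len h]; exact h, fun β hβ => by
    rw [resLT_len h] at hβ; exact resLT_val h hβ⟩

theorem resLT_eq_of_le {s s' : SeqLT o v} (h : s.le s') : resLT s' s.len = s := by
  refine SeqLT.ext' (resLT_len h.1) fun β => ?_
  rcases lt_or_ge β s.len with hβ | hβ
  · rw [resLT_val h.1 hβ, h.2 β hβ]
  · rw [(resLT s' s.len).val_zero β (by rwa [resLT_len h.1]), s.val_zero β hβ]

theorem resLT_resLT {s : SeqLT o v} {δ m : Ordinal.{u}} (h1 : δ ≤ m) (h2 : m ≤ s.len) :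
    resLT (resLT s m) δ = resLT s δ := by
  have h3 : δ ≤ (resLT s m).len := by rw [resLT_len h2]; exact h1
  refine SeqLT.ext' (by rw [resLT_len h3, resLT_len (h1.trans h2)]) fun β => ?_
  rcases lt_or_ge β δ with hβ | hβ
  · rw [resLT_val h3 hβ, resLT_val h2 (hβ.trans_le h1), resLT_val (h1.trans h2) hβ]
  · rw [(resLT (resLT s m) δ).val_zero β (by rwa [resLT_len h3]),
      (resLT s δ).val_zero β (by rwa [resLT_len (h1.trans h2)])]

theorem resLT_res {x : SeqFull o v} {δ α : Ordinal.{u}} (hδ : δ < o ⊔ 1) (hα : α ≤ δ) :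
    resLT (x.res δ) α = x.res α := by
  have h1 : α ≤ (x.res δ).len := by rw [SeqFull.res_len hδ]; exact hα
  have hα1 : α < o ⊔ 1 := lt_of_le_of_lt hα hδ
  refine SeqLT.ext' (by rw [resLT_len h1, SeqFull.res_len hα1]) fun β => ?_
  rcases lt_or_ge β α with hβ | hβ
  · rw [resLT_val h1 hβ, SeqFull.res_val hδ (hβ.trans_le hα), SeqFull.res_val hα1 hβ]
  · rw [(resLT (x.res δ) α).val_zero β (by rwa [resLT_len h1]),
      (x.res α).val_zero β (by rwa [SeqFull.res_len hα1])]

/-- The index of player I's move at the `l`-th step of the simulated run. -/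
def rho : Ordinal.{u} → Ordinal.{u} :=
  fun l => Ordinal.limitRecOn l 0 (fun _ r => r + 2)
    (fun lam _ ih => oSup lam fun δ => if h : δ < lam then ih δ h + 1 else 0)

theorem rho_zero : rho (0 : Ordinal.{u}) = 0 := by
  rw [rho, Ordinal.limitRecOn_zero]

theorem rho_succ (m : Ordinal.{u}) : rho (m + 1) = rho m + 2 := by
  conv_lhs => rw [rho, Ordinal.add_one_eq_succ, Ordinal.limitRecOn_succ]
  rfl

theorem rho_limit {lam : Ordinal.{u}} (h : Order.IsSuccLimit lam) :
    rho lam = oSup lam fun δ => if _ : δ < lam then rho δ + 1 else 0 := by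
  conv_lhs => rw [rho, Ordinal.limitRecOn_limit _ _ _ _ h]
  rfl

theorem rho_mono : ∀ l, ∀ δ < l, rho δ < rho l := by
  intro l
  induction l using Ordinal.induction with
  | h l IH =>
    intro δ hδ
    rcases Ordinal.zero_or_succ_or_isSuccLimit l with rfl | ⟨m, rfl⟩ | hlim
    · exact absurd hδ (Ordinal.not_lt_zero δ)
    · have hr : rho (Order.succ m) = rho m + 2 := by
        rw [← Ordinal.add_one_eq_succ, rho_succ]
      rw [hr]
      rcases eq_or_lt_of_le (Order.lt_succ_iff.mp hδ) with rfl | h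
      · exact lt_add_two_self _
      · exact (IH m (Order.lt_succ m) δ h).trans (lt_add_two_self _)
    · rw [rho_limit hlim]
      refine lt_of_lt_of_le (lt_add_one_self (rho δ)) ?_
      have h2 := le_oSup l (fun δ' => if _ : δ' < l then rho δ' + 1 else 0) hδ
      simpa only [dif_pos hδ] using h2

theorem rho_ge (l : Ordinal.{u}) : l ≤ rho l := by
  induction l using Ordinal.induction with
  | h l IH =>
    by_contra hcon
    push_neg at hcon
    have h1 := IH (rho l) hcon
    exact absurd (h1.trans_lt (rho_mono l (rho l) hcon)) (lt_irrefl _)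

theorem rho_limit_isLimit {lam : Ordinal.{u}} (h : Order.IsSuccLimit lam) : Order.IsSuccLimit (rho lam) := by
  rw [rho_limit h, Ordinal.isSuccLimit_iff, Order.isSuccPrelimit_iff_succ_lt]
  constructor
  · have h0 := le_oSup lam (fun δ' => if _ : δ' < lam then rho δ' + 1 else 0)
      (h.pos)
    simp only [dif_pos (h.pos)] at h0
    have h1 : (0 : Ordinal.{u}) < rho 0 + 1 := by
      rw [rho_zero, zero_add]; exact zero_lt_one
    exact (h1.trans_le h0).ne'
  · intro α hα
    obtain ⟨δ, hδ, hαδ⟩ := lt_oSup_iff.mp hα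
    simp only [dif_pos hδ] at hαδ
    have h1 : Order.succ α ≤ rho δ + 1 := by
      rw [← Ordinal.add_one_eq_succ]; exact add_one_le_iff_lt.mpr hαδ
    have hsδ : Order.succ δ < lam := h.succ_lt hδ
    have h2 : rho δ + 1 ≤ rho (Order.succ δ) :=
      add_one_le_iff_lt.mpr (rho_mono _ δ (Order.lt_succ δ))
    have h3 := le_oSup lam (fun δ' => if _ : δ' < lam then rho δ' + 1 else 0) hsδ
    simp only [dif_pos hsδ] at h3
    exact lt_of_le_of_lt (h1.trans h2) (lt_of_lt_of_le (lt_add_one_self _) h3)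

theorem rho_even (l : Ordinal.{u}) : EvenOrd (rho l) := by
  induction l using Ordinal.induction with
  | h l IH =>
    rcases Ordinal.zero_or_succ_or_isSuccLimit l with rfl | ⟨m, rfl⟩ | hlim
    · rw [rho_zero]; exact evenOrd_zero
    · have hr : rho (Order.succ m) = rho m + 2 := by
        rw [← Ordinal.add_one_eq_succ, rho_succ]
      rw [hr]; exact evenOrd_add_two (IH m (Order.lt_succ m))
    · exact evenOrd_of_isLimit (rho_limit_isLimit hlim)

theorem rho_cover : ∀ l, ∀ α < rho l + 1,
    (∃ δ, δ ≤ l ∧ α = rho δ) ∨ (∃ δ, δ < l ∧ α = rho δ + 1) := by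
  intro l
  induction l using Ordinal.induction with
  | h l IH =>
    intro α hα
    rcases Ordinal.zero_or_succ_or_isSuccLimit l with rfl | ⟨m, rfl⟩ | hlim
    · rw [rho_zero, zero_add, Ordinal.lt_one_iff_zero] at hα
      exact Or.inl ⟨0, le_rfl, by rw [hα, rho_zero]⟩
    · have hr : rho (Order.succ m) = rho m + 2 := by
        rw [← Ordinal.add_one_eq_succ, rho_succ]
      rw [hr, add_two_eq_succ_succ] at hα
      have hα2 : α ≤ rho m + 1 + 1 := by
        rw [Ordinal.add_one_eq_succ (rho m + 1)] at hα
        exact Order.lt_succ_iff.mp hα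
      rcases eq_or_lt_of_le hα2 with rfl | hα3
      · exact Or.inl ⟨Order.succ m, le_rfl, by rw [hr, add_two_eq_succ_succ]⟩
      · have hα4 : α ≤ rho m + 1 := by
          rw [Ordinal.add_one_eq_succ (rho m + 1)] at hα3
          exact Order.lt_succ_iff.mp hα3
        rcases eq_or_lt_of_le hα4 with rfl | hα5
        · exact Or.inr ⟨m, Order.lt_succ m, rfl⟩
        · rcases IH m (Order.lt_succ m) α hα5 with ⟨δ, hδ, rfl⟩ | ⟨δ, hδ, rfl⟩
          · exact Or.inl ⟨δ, hδ.trans (Order.lt_succ m).le, rfl⟩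
          · exact Or.inr ⟨δ, hδ.trans (Order.lt_succ m), rfl⟩
    · have hα2 : α ≤ rho l := by
        rw [Ordinal.add_one_eq_succ] at hα
        exact Order.lt_succ_iff.mp hα
      rcases eq_or_lt_of_le hα2 with rfl | hα3
      · exact Or.inl ⟨l, le_rfl, rfl⟩
      · rw [rho_limit hlim] at hα3
        obtain ⟨δ, hδ, hαδ⟩ := lt_oSup_iff.mp hα3
        simp only [dif_pos hδ] at hαδ
        rcases IH δ hδ α hαδ with ⟨δ', hδ', rfl⟩ | ⟨δ', hδ', rfl⟩
        · exact Or.inl ⟨δ', hδ'.trans hδ.le, rfl⟩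
        · exact Or.inr ⟨δ', hδ'.trans hδ, rfl⟩

theorem rho_lt_ord {ν : Cardinal.{u}} (hreg : ν.IsRegular) :
    ∀ l < ν.ord, rho l < ν.ord := by
  have holim : Order.IsSuccLimit (ν.ord) := Cardinal.isSuccLimit_ord hreg.aleph0_le
  intro l
  induction l using Ordinal.induction with
  | h l IH =>
    intro hl
    rcases Ordinal.zero_or_succ_or_isSuccLimit l with rfl | ⟨m, rfl⟩ | hlim
    · rw [rho_zero]; exact holim.pos
    · have hr : rho (Order.succ m) = rho m + 2 := by
        rw [← Ordinal.add_one_eq_succ, rho_succ]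
      rw [hr]
      exact add_two_lt holim (IH m (Order.lt_succ m) ((Order.lt_succ m).trans hl))
    · rw [rho_limit hlim]
      refine oSup_lt hreg hl fun δ hδ => ?_
      simp only [dif_pos hδ]
      rw [Ordinal.add_one_eq_succ]
      exact holim.succ_lt (IH δ hδ (hδ.trans hl))

end BMAux6

section BMAux7

attribute [local instance] Classical.propDecidable

open Ordinal Set

variable {o v : Ordinal.{u}}

/-- Simulated player II move plus extension of a position by two moves. -/
def qExt (E : Ordinal.{u} → SeqLT o v) (m : Ordinal.{u}) (q : Play o v) (c : Ordinal.{u}) :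
    Play o v := fun β =>
  if β = rho m + 1 then
    (if (q (rho m)).le (E c) then (E c).snoc 0 else (q (rho m)).snoc 0)
  else q β

def ext2 (σ : Strat o v) (E : Ordinal.{u} → SeqLT o v) (m : Ordinal.{u}) (q : Play o v)
    (c : Ordinal.{u}) : Play o v := fun α =>
  if α = rho m + 2 then σ (rho m + 2) (qExt E m q c) else qExt E m q c α

def qUn (lam : Ordinal.{u}) (G : Ordinal.{u} → Play o v) : Play o v := fun α =>
  if h : ∃ δ, δ < lam ∧ α < rho δ + 1 then G h.choose α else SeqLT.empty o v

def extL (σ : Strat o v) (lam : Ordinal.{u}) (q : Play o v) : Play o v := fun α =>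
  if α = rho lam then σ (rho lam) q else q α

theorem qExt_apply (E : Ordinal.{u} → SeqLT o v) (m : Ordinal.{u}) (q : Play o v)
    (c β : Ordinal.{u}) : qExt E m q c β =
    if β = rho m + 1 then
      (if (q (rho m)).le (E c) then (E c).snoc 0 else (q (rho m)).snoc 0)
    else q β := rfl

theorem ext2_apply (σ : Strat o v) (E : Ordinal.{u} → SeqLT o v) (m : Ordinal.{u})
    (q : Play o v) (c α : Ordinal.{u}) : ext2 σ E m q c α =
    if α = rho m + 2 then σ (rho m + 2) (qExt E m q c) else qExt E m q c α := rfl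

theorem extL_apply (σ : Strat o v) (lam : Ordinal.{u}) (q : Play o v) (α : Ordinal.{u}) :
    extL σ lam q α = if α = rho lam then σ (rho lam) q else q α := rfl

theorem qUn_pos {lam α : Ordinal.{u}} {G : Ordinal.{u} → Play o v}
    (h : ∃ δ, δ < lam ∧ α < rho δ + 1) : qUn lam G α = G h.choose α := by
  simp only [qUn]; exact dif_pos h

theorem qUn_neg {lam α : Ordinal.{u}} {G : Ordinal.{u} → Play o v}
    (h : ¬ ∃ δ, δ < lam ∧ α < rho δ + 1) : qUn lam G α = SeqLT.empty o v := by
  simp only [qUn]; exact dif_neg h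

/-- The simulated position after `l` rounds, for an input sequence of length `l`. -/
def Gfun (σ : Strat o v) (E : Ordinal.{u} → SeqLT o v) (l : Ordinal.{u}) :
    SeqLT o v → Play o v :=
  Ordinal.limitRecOn l
    (fun _ α => if α = 0 then σ 0 (fun _ => SeqLT.empty o v) else SeqLT.empty o v)
    (fun m ih s => ext2 σ E m (ih (resLT s m)) (s.val m))
    (fun lam _ ih s => extL σ lam
      (qUn lam fun δ => if h : δ < lam then ih δ h (resLT s δ) else fun _ => SeqLT.empty o v))

theorem Gfun_zero (σ : Strat o v) (E : Ordinal.{u} → SeqLT o v) (s : SeqLT o v) :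
    Gfun σ E 0 s = fun α => if α = 0 then σ 0 (fun _ => SeqLT.empty o v)
      else SeqLT.empty o v := by
  conv_lhs => rw [Gfun, Ordinal.limitRecOn_zero]

theorem Gfun_succ (σ : Strat o v) (E : Ordinal.{u} → SeqLT o v) (m : Ordinal.{u})
    (s : SeqLT o v) :
    Gfun σ E (m + 1) s = ext2 σ E m (Gfun σ E m (resLT s m)) (s.val m) := by
  conv_lhs => rw [Gfun, Ordinal.add_one_eq_succ, Ordinal.limitRecOn_succ]
  rfl

theorem Gfun_limit (σ : Strat o v) (E : Ordinal.{u} → SeqLT o v) {lam : Ordinal.{u}}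
    (h : Order.IsSuccLimit lam) (s : SeqLT o v) :
    Gfun σ E lam s = extL σ lam
      (qUn lam fun δ => if _ : δ < lam then Gfun σ E δ (resLT s δ)
        else fun _ => SeqLT.empty o v) := by
  conv_lhs => rw [Gfun, Ordinal.limitRecOn_limit _ _ _ _ h]
  rfl

/-- The homomorphism induced by a strategy for player I. -/
def fHom (σ : Strat o v) (E : Ordinal.{u} → SeqLT o v) : SeqLT o v → SeqLT o v :=
  fun s => Gfun σ E s.len s (rho s.len)

end BMAux7

section BMAux8

attribute [local instance] Classical.propDecidable

open Ordinal Set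

theorem dense_of_winI {ν : Cardinal.{u}} (hreg : ν.IsRegular)
    (hpow : Cardinal.powerlt ν ν = ν) {A : Set (SeqFull ν.ord ν.ord)}
    (hW : WinIStrat (SeqLT.empty ν.ord ν.ord) A) :
    ∃ f : SeqLT ν.ord ν.ord → SeqLT ν.ord ν.ord,
      IsHom f ∧ IsDenseMap f ∧ ∀ x y, FStarVal f x y → y ∈ A := by
  obtain ⟨σ, hleg, hwin⟩ := hW
  obtain ⟨E, hE⟩ := exists_enum hreg hpow
  have holim : Order.IsSuccLimit (ν.ord) := Cardinal.isSuccLimit_ord hreg.aleph0_le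
  have ho1 : ν.ord ⊔ 1 = ν.ord := sup_one_eq hreg
  have hlen_lt : ∀ s : SeqLT ν.ord ν.ord, s.len < ν.ord := fun s =>
    lt_of_lt_of_le s.len_lt ho1.le
  have hsnoc1 : ∀ s : SeqLT ν.ord ν.ord, s.len + 1 < ν.ord ⊔ 1 := fun s => by
    rw [ho1, Ordinal.add_one_eq_succ]; exact holim.succ_lt (hlen_lt s)
  have hv0 : (0 : Ordinal.{u}) < ν.ord := holim.pos
  have hrρ : ∀ l, l < ν.ord → rho l < ν.ord := rho_lt_ord hreg
  have hrρ1 : ∀ l, l < ν.ord → rho l + 1 < ν.ord := fun l hl => by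
    rw [Ordinal.add_one_eq_succ]; exact holim.succ_lt (hrρ l hl)
  have h22 : ∀ a : Ordinal.{u}, a + 2 = (a + 1) + 1 := add_two_eq_succ_succ
  have hresPlay_eq : ∀ (p q : Play ν.ord ν.ord) (γ : Ordinal.{u}),
      (∀ β, β < γ → p β = q β) → resPlay p γ = resPlay q γ := by
    intro p q γ h
    funext β
    simp only [resPlay]
    by_cases hβ : β < γ
    · rw [if_pos hβ, if_pos hβ, h β hβ]
    · rw [if_neg hβ, if_neg hβ]
  -- The master invariant
  have hInv : ∀ l, l < ν.ord → ∀ s : SeqLT ν.ord ν.ord, s.len = l →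
      IsPos (SeqLT.empty ν.ord ν.ord) (Gfun σ E l s) (rho l + 1) ∧
      FollowsI σ (Gfun σ E l s) (rho l + 1) ∧
      (∀ δ, δ < l → ∀ α, α < rho δ + 1 → Gfun σ E l s α = Gfun σ E δ (resLT s δ) α) := by
    intro l
    induction l using Ordinal.induction with
    | h l IH =>
      intro hl s hs
      rcases Ordinal.zero_or_succ_or_isSuccLimit l with rfl | ⟨m, rfl⟩ | hlim
      · -- zero case
        have hG := Gfun_zero σ E s
        have hr0 : rho (0 : Ordinal.{u}) + 1 = 1 := by rw [rho_zero, zero_add]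
        refine ⟨⟨?_, fun _ => SeqLT.empty_le _, ?_⟩, ?_, ?_⟩
        · intro α β hαβ hβ
          rw [hr0, Ordinal.lt_one_iff_zero] at hβ
          subst hβ
          exact absurd hαβ (Ordinal.not_lt_zero α)
        · intro α hα
          rw [hr0] at hα
          have hα0 : α ≠ 0 := fun h => by
            rw [h] at hα; exact absurd (lt_of_lt_of_le zero_lt_one hα) (lt_irrefl _)
          simp only [hG]
          rw [if_neg hα0]
        · intro α hα _
          rw [hr0, Ordinal.lt_one_iff_zero] at hα
          subst hα
          have hres0 : resPlay (Gfun σ E 0 s) 0 = (fun _ => SeqLT.empty ν.ord ν.ord) := by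
            funext β
            simp only [resPlay]
            exact if_neg (Ordinal.not_lt_zero β)
          rw [hres0]
          simp only [hG]
          exact if_pos trivial
        · intro δ hδ
          exact absurd hδ (Ordinal.not_lt_zero δ)
      · -- successor case
        have hm : m < ν.ord := (Order.lt_succ m).trans hl
        have hms : m ≤ s.len := by rw [hs]; exact (Order.lt_succ m).le
        obtain ⟨hI1, hI2, hI3⟩ := IH m (Order.lt_succ m) hm (resLT s m) (resLT_len hms)
        have hGs : Gfun σ E (Order.succ m) s =
            ext2 σ E m (Gfun σ E m (resLT s m)) (s.val m) := by
          rw [← Ordinal.add_one_eq_succ, Gfun_succ]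
        have hrs : rho (Order.succ m) = rho m + 2 := by
          rw [← Ordinal.add_one_eq_succ, rho_succ]
        set q := Gfun σ E m (resLT s m) with hq
        set u := if (q (rho m)).le (E (s.val m)) then (E (s.val m)).snoc 0
          else (q (rho m)).snoc 0 with hu
        have hqE : ∀ β, qExt E m q (s.val m) β = if β = rho m + 1 then u else q β := by
          intro β; rw [qExt_apply, hu]
        have hne12 : rho m + 1 ≠ rho m + 2 := by
          rw [h22]; exact (lt_add_one_self _).ne
        have hlt12 : rho m + 1 < rho m + 2 := by rw [h22]; exact lt_add_one_self _
        have hu_slt : (q (rho m)).slt u := by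
          rw [hu]
          by_cases hle : (q (rho m)).le (E (s.val m))
          · rw [if_pos hle]
            exact SeqLT.slt_of_le_of_slt hle (SeqLT.slt_snoc (hsnoc1 _) hv0)
          · rw [if_neg hle]
            exact SeqLT.slt_snoc (hsnoc1 _) hv0
        have hqmono : ∀ α, α ≤ rho m → (q α).le (q (rho m)) := by
          intro α hα
          rcases eq_or_lt_of_le hα with rfl | h
          · exact SeqLT.le_refl _
          · exact (hI1.1 α (rho m) h (lt_add_one_self _)).1
        have hqE_pos : IsPos (SeqLT.empty ν.ord ν.ord) (qExt E m q (s.val m)) (rho m + 2) := by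
          refine ⟨?_, fun _ => SeqLT.empty_le _, ?_⟩
          · intro α β hαβ hβ
            rw [h22] at hβ
            have hβ' : β ≤ rho m + 1 := by
              rw [Ordinal.add_one_eq_succ (rho m + 1)] at hβ
              exact Order.lt_succ_iff.mp hβ
            rcases eq_or_lt_of_le hβ' with rfl | hβ2
            · rw [hqE α, if_neg hαβ.ne, hqE _, if_pos rfl]
              have hαm : α ≤ rho m := by
                rw [Ordinal.add_one_eq_succ] at hαβ
                exact Order.lt_succ_iff.mp hαβ
              exact SeqLT.slt_of_le_of_slt (hqmono α hαm) hu_slt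
            · rw [hqE α, hqE β, if_neg (hαβ.trans hβ2).ne, if_neg hβ2.ne]
              exact hI1.1 α β hαβ hβ2
          · intro α hα
            have hα1 : rho m + 1 ≤ α := (le_of_lt hlt12).trans hα
            rw [hqE α, if_neg (lt_of_lt_of_le hlt12 hα).ne']
            exact hI1.2.2 α hα1
        have hmok := hleg (rho m + 2) (hrs ▸ hrρ _ hl) (evenOrd_add_two (rho_even m))
          (qExt E m q (s.val m)) hqE_pos
        have hGa : ∀ α, Gfun σ E (Order.succ m) s α =
            if α = rho m + 2 then σ (rho m + 2) (qExt E m q (s.val m))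
            else qExt E m q (s.val m) α := by
          intro α; rw [hGs, ext2_apply, hq]
        refine ⟨⟨?_, fun _ => SeqLT.empty_le _, ?_⟩, ?_, ?_⟩
        · -- chain
          intro α β hαβ hβ
          rw [hrs] at hβ
          have hβ' : β ≤ rho m + 2 := by
            rw [Ordinal.add_one_eq_succ (rho m + 2)] at hβ
            exact Order.lt_succ_iff.mp hβ
          rcases eq_or_lt_of_le hβ' with rfl | hβ2
          · rw [hGa α, if_neg hαβ.ne, hGa _, if_pos rfl]
            exact hmok.1 α hαβ
          · rw [hGa α, hGa β, if_neg (hαβ.trans hβ2).ne, if_neg hβ2.ne]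
            exact hqE_pos.1 α β hαβ hβ2
        · -- normalize
          intro α hα
          rw [hrs] at hα
          have h1 : rho m + 2 < α := lt_of_lt_of_le (lt_add_one_self _) hα
          rw [hGa α, if_neg h1.ne']
          exact hqE_pos.2.2 α ((le_of_lt (lt_add_one_self _)).trans hα)
        · -- follows
          intro α hα hev
          rw [hrs] at hα
          have hα' : α ≤ rho m + 2 := by
            rw [Ordinal.add_one_eq_succ (rho m + 2)] at hα
            exact Order.lt_succ_iff.mp hα
          rcases eq_or_lt_of_le hα' with rfl | hα2
          · rw [hGa _, if_pos rfl]
            have hrp : resPlay (Gfun σ E (Order.succ m) s) (rho m + 2) =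
                qExt E m q (s.val m) := by
              funext β
              simp only [resPlay]
              by_cases hβ : β < rho m + 2
              · rw [if_pos hβ, hGa β, if_neg hβ.ne]
              · rw [if_neg hβ, (hqE_pos.2.2 β (not_lt.mp hβ))]
            rw [hrp]
          · have hα3 : α ≤ rho m + 1 := by
              rw [h22] at hα2
              rw [Ordinal.add_one_eq_succ (rho m + 1)] at hα2
              exact Order.lt_succ_iff.mp hα2
            rcases eq_or_lt_of_le hα3 with rfl | hα4
            · exact absurd hev fun h =>
                not_evenOrd_and_oddOrd h (oddOrd_succ_of_evenOrd (rho_even m))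
            · have hGα : Gfun σ E (Order.succ m) s α = q α := by
                rw [hGa α, if_neg hα2.ne, hqE α, if_neg hα4.ne]
              rw [hGα, hI2 α hα4 hev]
              have hrp : resPlay (Gfun σ E (Order.succ m) s) α = resPlay q α := by
                refine hresPlay_eq _ _ α fun β hβ => ?_
                rw [hGa β, if_neg (hβ.trans (hα4.trans hlt12)).ne, hqE β,
                  if_neg (hβ.trans hα4).ne]
              rw [hrp]
        · -- coherence
          intro δ hδ α hα
          rcases eq_or_lt_of_le (Order.lt_succ_iff.mp hδ) with rfl | hδm
          · have hα2 : α < rho δ + 2 := hα.trans hlt12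
            rw [hGa α, if_neg hα2.ne, hqE α, if_neg hα.ne]
          · have hαm : α < rho m + 1 :=
              hα.trans_le ((add_one_le_iff_lt.mpr (rho_mono m δ hδm)).trans
                (le_of_lt (lt_add_one_self _)))
            have hGα : Gfun σ E (Order.succ m) s α = q α := by
              rw [hGa α, if_neg (hαm.trans hlt12).ne, hqE α, if_neg hαm.ne]
            rw [hGα, hI3 δ hδm α hα, resLT_resLT hδm.le hms]
      · -- limit case
        have hGl : Gfun σ E l s = extL σ l
            (qUn l fun δ => if _ : δ < l then Gfun σ E δ (resLT s δ)
              else fun _ => SeqLT.empty ν.ord ν.ord) :=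
          Gfun_limit σ E hlim s
        set Gq := qUn l fun δ => if _ : δ < l then Gfun σ E δ (resLT s δ)
          else fun _ => SeqLT.empty ν.ord ν.ord with hGq
        have hrlt : ∀ α, α < rho l ↔ ∃ δ, δ < l ∧ α < rho δ + 1 := by
          intro α
          rw [rho_limit hlim, lt_oSup_iff]
          constructor
          · rintro ⟨δ, hδ, hαδ⟩
            rw [dif_pos hδ] at hαδ
            exact ⟨δ, hδ, hαδ⟩
          · rintro ⟨δ, hδ, hαδ⟩
            exact ⟨δ, hδ, by rw [dif_pos hδ]; exact hαδ⟩
        have hIδ : ∀ δ, δ < l →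
            IsPos (SeqLT.empty ν.ord ν.ord) (Gfun σ E δ (resLT s δ)) (rho δ + 1) ∧
            FollowsI σ (Gfun σ E δ (resLT s δ)) (rho δ + 1) ∧
            (∀ δ', δ' < δ → ∀ α, α < rho δ' + 1 →
              Gfun σ E δ (resLT s δ) α = Gfun σ E δ' (resLT (resLT s δ) δ') α) := by
          intro δ hδ
          exact IH δ hδ (hδ.trans hl) (resLT s δ) (resLT_len (by rw [hs]; exact hδ.le))
        have hcoh : ∀ δ δ', δ ≤ δ' → δ' < l → ∀ α, α < rho δ + 1 →
            Gfun σ E δ' (resLT s δ') α = Gfun σ E δ (resLT s δ) α := by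
          intro δ δ' hδδ hδ' α hα
          rcases eq_or_lt_of_le hδδ with rfl | hlt
          · rfl
          · rw [(hIδ δ' hδ').2.2 δ hlt α hα,
              resLT_resLT hδδ (by rw [hs]; exact hδ'.le)]
        have hQa : ∀ δ, δ < l → ∀ α, α < rho δ + 1 →
            Gq α = Gfun σ E δ (resLT s δ) α := by
          intro δ hδ α hα
          have hex : ∃ δ', δ' < l ∧ α < rho δ' + 1 := ⟨δ, hδ, hα⟩
          rw [hGq, qUn_pos hex, dif_pos hex.choose_spec.1]
          rcases le_total hex.choose δ with h | h
          · rw [hcoh hex.choose δ h hδ α hex.choose_spec.2]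
          · rw [hcoh δ hex.choose h hex.choose_spec.1 α hα]
        have hQpos : IsPos (SeqLT.empty ν.ord ν.ord) Gq (rho l) := by
          refine ⟨?_, fun _ => SeqLT.empty_le _, ?_⟩
          · intro α β hαβ hβ
            obtain ⟨δ, hδ, hβδ⟩ := (hrlt β).mp hβ
            rw [hQa δ hδ α (hαβ.trans hβδ), hQa δ hδ β hβδ]
            exact (hIδ δ hδ).1.1 α β hαβ hβδ
          · intro α hα
            rw [hGq, qUn_neg ?_]
            rintro ⟨δ, hδ, hαδ⟩
            have h1 : rho δ + 1 ≤ rho l := add_one_le_iff_lt.mpr (rho_mono l δ hδ)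
            exact absurd (hαδ.trans_le h1) (not_lt.mpr hα)
        have hmok := hleg (rho l) (hrρ l hl) (rho_even l) Gq hQpos
        have hGa : ∀ α, Gfun σ E l s α = if α = rho l then σ (rho l) Gq else Gq α := by
          intro α; rw [hGl, extL_apply, hGq]
        refine ⟨⟨?_, fun _ => SeqLT.empty_le _, ?_⟩, ?_, ?_⟩
        · intro α β hαβ hβ
          have hβ' : β ≤ rho l := by
            rw [Ordinal.add_one_eq_succ] at hβ
            exact Order.lt_succ_iff.mp hβ
          rcases eq_or_lt_of_le hβ' with rfl | hβ2
          · rw [hGa α, if_neg hαβ.ne, hGa _, if_pos rfl]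
            exact hmok.1 α hαβ
          · rw [hGa α, hGa β, if_neg (hαβ.trans hβ2).ne, if_neg hβ2.ne]
            exact hQpos.1 α β hαβ hβ2
        · intro α hα
          have h1 : rho l < α := lt_of_lt_of_le (lt_add_one_self _) hα
          rw [hGa α, if_neg h1.ne']
          exact hQpos.2.2 α h1.le
        · intro α hα hev
          have hα' : α ≤ rho l := by
            rw [Ordinal.add_one_eq_succ] at hα
            exact Order.lt_succ_iff.mp hα
          rcases eq_or_lt_of_le hα' with rfl | hα2
          · rw [hGa _, if_pos rfl]
            have hrp : resPlay (Gfun σ E l s) (rho l) = Gq := by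
              funext β
              simp only [resPlay]
              by_cases hβ : β < rho l
              · rw [if_pos hβ, hGa β, if_neg hβ.ne]
              · rw [if_neg hβ, (hQpos.2.2 β (not_lt.mp hβ))]
            rw [hrp]
          · obtain ⟨δ, hδ, hαδ⟩ := (hrlt α).mp hα2
            have hGα : Gfun σ E l s α = Gfun σ E δ (resLT s δ) α := by
              rw [hGa α, if_neg hα2.ne, hQa δ hδ α hαδ]
            rw [hGα, (hIδ δ hδ).2.1 α hαδ hev]
            have hrp : resPlay (Gfun σ E l s) α =
                resPlay (Gfun σ E δ (resLT s δ)) α := by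
              refine hresPlay_eq _ _ α fun β hβ => ?_
              rw [hGa β, if_neg (hβ.trans hα2).ne, hQa δ hδ β (hβ.trans hαδ)]
            rw [hrp]
        · intro δ hδ α hα
          have hαl : α < rho l := (hrlt α).mpr ⟨δ, hδ, hα⟩
          rw [hGa α, if_neg hαl.ne, hQa δ hδ α hα]
  -- conclusion
  refine ⟨fHom σ E, ?_, ?_, ?_⟩
  · -- homomorphism
    intro s s2 hss
    have hI := hInv s2.len (hlen_lt s2) s2 rfl
    have h1 : Gfun σ E s2.len s2 (rho s.len) = Gfun σ E s.len s (rho s.len) := by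
      rw [hI.2.2 s.len hss.2 (rho s.len) (lt_add_one_self _), resLT_eq_of_le hss.1]
    have h2 := hI.1.1 (rho s.len) (rho s2.len) (rho_mono s2.len s.len hss.2)
      (lt_add_one_self _)
    rw [h1] at h2
    exact h2
  · -- density
    intro s t hft
    obtain ⟨β, hβ, hEβ⟩ := hE t
    refine ⟨β, hβ, ?_⟩
    have hlen2 : (s.snoc β).len = s.len + 1 := SeqLT.snoc_len (hsnoc1 s) hβ
    have hval2 : (s.snoc β).val s.len = β := SeqLT.snoc_val_last (hsnoc1 s) hβ
    have hres2 : resLT (s.snoc β) s.len = s :=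
      resLT_eq_of_le (SeqLT.le_snoc (hsnoc1 s) hβ)
    have hG2 : Gfun σ E (s.snoc β).len (s.snoc β) =
        ext2 σ E s.len (Gfun σ E s.len s) β := by
      rw [hlen2, Gfun_succ, hres2, hval2]
    have hrs2 : rho (s.snoc β).len = rho s.len + 2 := by rw [hlen2, rho_succ]
    have hI := hInv (s.snoc β).len (hlen_lt _) (s.snoc β) rfl
    have hlt12 : rho s.len + 1 < rho s.len + 2 := by
      rw [h22]; exact lt_add_one_self _
    have hchain := hI.1.1 (rho s.len + 1) (rho s.len + 2)
      hlt12 (by rw [hrs2]; exact lt_add_one_self _)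
    have hmid : Gfun σ E (s.snoc β).len (s.snoc β) (rho s.len + 1) = t.snoc 0 := by
      rw [hG2, ext2_apply, if_neg hlt12.ne, qExt_apply, if_pos rfl, hEβ,
        if_pos (show (Gfun σ E s.len s (rho s.len)).le t from hft)]
    have hlast : Gfun σ E (s.snoc β).len (s.snoc β) (rho s.len + 2) =
        fHom σ E (s.snoc β) := by
      rw [fHom, hrs2]
    rw [hmid, hlast] at hchain
    refine SeqLT.le_trans (SeqLT.le_snoc (hsnoc1 t) hv0) hchain.1
  · -- range of f* contained in A
    intro x y hxy
    have hxlen : ∀ δ, δ < ν.ord → (x.res δ).len = δ := fun δ hδ =>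
      SeqFull.res_len (lt_of_lt_of_le hδ le_sup_left)
    have hIδ : ∀ δ, δ < ν.ord →
        IsPos (SeqLT.empty ν.ord ν.ord) (Gfun σ E δ (x.res δ)) (rho δ + 1) ∧
        FollowsI σ (Gfun σ E δ (x.res δ)) (rho δ + 1) ∧
        (∀ δ', δ' < δ → ∀ α, α < rho δ' + 1 →
          Gfun σ E δ (x.res δ) α = Gfun σ E δ' (resLT (x.res δ) δ') α) :=
      fun δ hδ => hInv δ hδ (x.res δ) (hxlen δ hδ)
    have hcoh : ∀ δ δ', δ ≤ δ' → δ' < ν.ord → ∀ α, α < rho δ + 1 →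
        Gfun σ E δ' (x.res δ') α = Gfun σ E δ (x.res δ) α := by
      intro δ δ' h1 h2 α hα
      rcases eq_or_lt_of_le h1 with rfl | hlt
      · rfl
      · rw [(hIδ δ' h2).2.2 δ hlt α hα, resLT_res (lt_of_lt_of_le h2 le_sup_left) h1]
    have hPa : ∀ δ, δ < ν.ord → ∀ α, α < rho δ + 1 →
        qUn ν.ord (fun δ => Gfun σ E δ (x.res δ)) α = Gfun σ E δ (x.res δ) α := by
      intro δ hδ α hα
      have hex : ∃ δ', δ' < ν.ord ∧ α < rho δ' + 1 := ⟨δ, hδ, hα⟩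
      rw [qUn_pos hex]
      rcases le_total hex.choose δ with h | h
      · rw [hcoh hex.choose δ h hδ α hex.choose_spec.2]
      · rw [hcoh δ hex.choose h hex.choose_spec.1 α hα]
    have hget : ∀ α, α < ν.ord → α < rho (α + 1) + 1 ∧ α + 1 < ν.ord := by
      intro α hα
      have h1 : α + 1 < ν.ord := by
        rw [Ordinal.add_one_eq_succ]; exact holim.succ_lt hα
      exact ⟨((rho_ge α).trans_lt (rho_mono (α + 1) α (lt_add_one_self α))).trans
        (lt_add_one_self _), h1⟩
    have hPpos : IsPos (SeqLT.empty ν.ord ν.ord)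
        (qUn ν.ord (fun δ => Gfun σ E δ (x.res δ))) ν.ord := by
      refine ⟨?_, fun _ => SeqLT.empty_le _, ?_⟩
      · intro α β hαβ hβ
        obtain ⟨h1, h2⟩ := hget β hβ
        rw [hPa (β + 1) h2 α (hαβ.trans h1), hPa (β + 1) h2 β h1]
        exact (hIδ (β + 1) h2).1.1 α β hαβ h1
      · intro α hα
        rw [qUn_neg ?_]
        rintro ⟨δ, hδ, hαδ⟩
        exact absurd (hαδ.trans (hrρ1 δ hδ)) (not_lt.mpr hα)
    have hPfoll : FollowsI σ (qUn ν.ord (fun δ => Gfun σ E δ (x.res δ))) ν.ord := by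
      intro α hα hev
      obtain ⟨h1, h2⟩ := hget α hα
      rw [hPa (α + 1) h2 α h1, (hIδ (α + 1) h2).2.1 α h1 hev]
      have hrp : resPlay (qUn ν.ord (fun δ => Gfun σ E δ (x.res δ))) α =
          resPlay (Gfun σ E (α + 1) (x.res (α + 1))) α :=
        hresPlay_eq _ _ α fun β hβ => hPa (α + 1) h2 β (hβ.trans h1)
      rw [hrp]
    obtain ⟨x', hout', hx'A⟩ := hwin _ hPpos hPfoll
    have hyout : IsOutcome (qUn ν.ord (fun δ => Gfun σ E δ (x.res δ))) y := by
      constructor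
      · intro α hα
        obtain ⟨h1, h2⟩ := hget α hα
        rw [hPa (α + 1) h2 α h1]
        have hf : fHom σ E (x.res (α + 1)) = Gfun σ E (α + 1) (x.res (α + 1)) (rho (α + 1)) := by
          simp only [fHom, hxlen (α + 1) h2]
        have hαρ : α < rho (α + 1) :=
          (rho_ge α).trans_lt (rho_mono (α + 1) α (lt_add_one_self α))
        have hle : (Gfun σ E (α + 1) (x.res (α + 1)) α).le (fHom σ E (x.res (α + 1))) := by
          rw [hf]
          exact ((hIδ (α + 1) h2).1.1 α (rho (α + 1)) hαρ (lt_add_one_self _)).1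
        exact SeqLT.prefixOf_of_le hle (hxy.1 (α + 1) h2)
      · intro β hβ
        obtain ⟨α, hα, hβα⟩ := hxy.2 β hβ
        refine ⟨rho α, hrρ α hα, ?_⟩
        have hf : fHom σ E (x.res α) = Gfun σ E α (x.res α) (rho α) := by
          simp only [fHom, hxlen α hα]
        rw [hPa α hα (rho α) (lt_add_one_self _), ← hf]
        exact hβα
    rw [outcome_unique hyout hout']
    exact hx'A

end BMAux8

/-- For an infinite regular cardinal `ν` with `ν^{<ν} = ν` and `A ⊆ ν^ν`: player I has a
winning strategy in the Banach–Mazur game `G_ν(A)` iff there is a dense homomorphism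
`f : ν^{<ν} → ν^{<ν}` with `ran f* ⊆ A`. -/
theorem statement7 (ν : Cardinal.{u}) (hreg : ν.IsRegular)
    (hpow : Cardinal.powerlt ν ν = ν) (A : Set (SeqFull ν.ord ν.ord)) :
    WinIStrat (SeqLT.empty ν.ord ν.ord) A ↔
      ∃ f : SeqLT ν.ord ν.ord → SeqLT ν.ord ν.ord,
        IsHom f ∧ IsDenseMap f ∧ ∀ x y, FStarVal f x y → y ∈ A := by
  constructor
  · intro h
    exact dense_of_winI hreg hpow h
  · rintro ⟨f, hhom, hden, hA⟩
    exact winI_of_dense hreg hhom hden hA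

end
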